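/- arXiv:2103.05604 — 7 statements merged into one kernel-verified Lean document; each statement's English description precedes it below -/
import Mathlib

section
/- Run Algorithm 2 on an unweighted SPPT instance with distortion at most μ. If at time t a job is moved from bin F to bin P (the procedure UponHeavyF is called), then for every real x ≥ 0 the covered volume is unchanged: cov(x, t) = cov(x, t⁻). -/
open MeasureTheory
open scoped Classical

noncomputable section

/-- A configuration of Algorithm 2: the pending jobs are kept in two bins,
a full bin `QF` and a partial bin `QP`; each bin carries a bijective priority map
onto `{1, …, size of bin}`, and every pending job has a remaining processing time. -/
structure Config (n : ℕ) where
  QF : Finset (Fin n)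
  QP : Finset (Fin n)
  rem : Fin n → ℝ
  prF : Fin n → ℕ
  prP : Fin n → ℕ
  disj : Disjoint QF QP
  bijF : Set.BijOn prF (QF : Set (Fin n)) (Set.Icc 1 QF.card)
  bijP : Set.BijOn prP (QP : Set (Fin n)) (Set.Icc 1 QP.card)

variable {n : ℕ}

/-- `wbase q`: the number of jobs in `q`'s own bin whose priority is at most that
of `q` (for unit weights this is the total weight of `base(q)`). -/
def wbase (C : Config n) (q : Fin n) : ℕ :=
  if q ∈ C.QF then (C.QF.filter fun a => C.prF a ≤ C.prF q).card
  else (C.QP.filter fun a => C.prP a ≤ C.prP q).card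

/-- The volume covered by a bar at height `x`: the sum over pending jobs `q`
of the remaining processing time of `q` if `x ≥ wbase q`, and `0` otherwise. -/
def cov (C : Config n) (x : ℝ) : ℝ :=
  ∑ q ∈ C.QF ∪ C.QP, if (wbase C q : ℝ) ≤ x then C.rem q else 0

/-- `V`: the total remaining volume of pending jobs. -/
def vol (C : Config n) : ℝ :=
  ∑ q ∈ C.QF ∪ C.QP, C.rem q

/-- The ordered pair `(q₁, q₂)` of jobs of the full bin is a violation if `q₁` has
higher priority but `μ · p̃ q₂ ≤ p̃ q₁`. -/
def IsViolation (μ : ℝ) (pt : Fin n → ℝ) (C : Config n) (q₁ q₂ : Fin n) : Prop :=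
  q₁ ∈ C.QF ∧ q₂ ∈ C.QF ∧ C.prF q₂ < C.prF q₁ ∧ μ * pt q₂ ≤ pt q₁

/-- No ordered pair of jobs of the full bin forms a violation. -/
def NoViolations (μ : ℝ) (pt : Fin n → ℝ) (C : Config n) : Prop :=
  ∀ q₁ q₂, ¬ IsViolation μ pt C q₁ q₂

/-- The priorities of the full bin after releasing job `q`: `q` is first inserted at the
top (priority `|QF| + 1`), and then the cyclic rotation fixing all the violations
involving `q` is applied: `q` receives the lowest priority of a job in violation with
it, each job in violation with `q` moves up to the priority of the next higher-priority
violating job (the highest-priority one receiving `q`'s top priority `|QF| + 1`),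
and all other priorities are unchanged. -/
def rotatedPr (μ : ℝ) (pt : Fin n → ℝ) (C : Config n) (q : Fin n) : Fin n → ℕ :=
  fun a =>
    if a = q then
      WithBot.unbotD (C.QF.card + 1) ((C.QF.filter fun b => μ * pt b ≤ pt q).image C.prF).min
    else if a ∈ C.QF.filter (fun b => μ * pt b ≤ pt q) then
      WithBot.unbotD (C.QF.card + 1)
        ((((C.QF.filter fun b => μ * pt b ≤ pt q).filter
            fun b => C.prF a < C.prF b).image C.prF).min)
    else C.prF a

/-- `UponJobRelease q` of Algorithm 2 turns configuration `C` into `C'`: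
the new job `q` (full, so its remaining time is `p q`) enters the full bin and the
rotation fixing all violations involving `q` is applied. -/
def ReleaseStep (μ : ℝ) (p pt : Fin n → ℝ) (C C' : Config n) (q : Fin n) : Prop :=
  q ∉ C.QF ∧ q ∉ C.QP ∧
  C'.QF = insert q C.QF ∧ C'.QP = C.QP ∧
  C'.rem q = p q ∧ (∀ a, a ≠ q → C'.rem a = C.rem a) ∧
  (∀ a ∈ C'.QF, C'.prF a = rotatedPr μ pt C q a) ∧
  (∀ a ∈ C.QP, C'.prP a = C.prP a)

/-- `UponHeavyF` of Algorithm 2 turns configuration `C` into `C'`: it is called as soon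
as `|QF| > |QP|` (so `|QF| = |QP| + 1`), and it moves the top-priority job of the full
bin to the top priority of the partial bin (LIFO). -/
def MoveStep (C C' : Config n) (q : Fin n) : Prop :=
  C.QF.card = C.QP.card + 1 ∧ q ∈ C.QF ∧ C.prF q = C.QF.card ∧
  C'.QF = C.QF.erase q ∧ C'.QP = insert q C.QP ∧ C'.rem = C.rem ∧
  (∀ a ∈ C'.QF, C'.prF a = C.prF a) ∧ (∀ a ∈ C.QP, C'.prP a = C.prP a) ∧
  C'.prP q = C.QP.card + 1

/-- Processing for a duration `d`: the top-priority job of the partial bin is processed,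
decreasing its remaining time by `d`. -/
def ProcessStep (C C' : Config n) (q : Fin n) (d : ℝ) : Prop :=
  C.QF.card ≤ C.QP.card ∧ q ∈ C.QP ∧ C.prP q = C.QP.card ∧
  0 ≤ d ∧ d ≤ C.rem q ∧
  C'.QF = C.QF ∧ C'.QP = C.QP ∧ C'.prF = C.prF ∧ C'.prP = C.prP ∧
  C'.rem q = C.rem q - d ∧ (∀ a, a ≠ q → C'.rem a = C.rem a)

/-- A fully processed job (the top-priority job of the partial bin, with zero
remaining time) is completed and leaves the system. -/
def CompleteStep (C C' : Config n) (q : Fin n) : Prop :=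
  q ∈ C.QP ∧ C.prP q = C.QP.card ∧ C.rem q = 0 ∧
  C'.QF = C.QF ∧ C'.QP = C.QP.erase q ∧ C'.prF = C.prF ∧
  (∀ a ∈ C'.QP, C'.prP a = C.prP a) ∧ C'.rem = C.rem
/-- In a run of Algorithm 2 on an unweighted SPPT instance with
distortion at most `μ`, if a job is moved from bin `F` to bin `P` (the procedure
`UponHeavyF` is called), then for every `x ≥ 0` the covered volume is unchanged:
`cov(x, t) = cov(x, t⁻)`. -/
theorem move_preserves_cov
    (n : ℕ) (μ : ℝ) (p pt : Fin n → ℝ)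
    (hp : ∀ q, 0 < p q) (hpt : ∀ q, 0 < pt q)
    (hdist : ∀ q, pt q ≤ p q ∧ p q < μ * pt q)
    (C C' : Config n) (q : Fin n)
    (hstep : MoveStep C C' q) :
    ∀ x : ℝ, 0 ≤ x → cov C' x = cov C x := by
  intro x hx
  obtain ⟨hcard, hqF, hprq, hQF', hQP', hrem, hprF, hprP, hprPq⟩ := hstep
  have hqP : q ∉ C.QP := Finset.disjoint_left.mp C.disj hqF
  have hU : C'.QF ∪ C'.QP = C.QF ∪ C.QP := by
    rw [hQF', hQP']
    ext a
    by_cases h : a = q <;> simp [h, hqF]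
  have hw : ∀ a ∈ C.QF ∪ C.QP, wbase C' a = wbase C a := by
    intro a ha
    by_cases haq : a = q
    · subst haq
      have h1 : wbase C a = C.QP.card + 1 := by
        have : (C.QF.filter fun b => C.prF b ≤ C.prF a) = C.QF := by
          apply Finset.filter_true_of_mem
          intro b hb
          have := (C.bijF.mapsTo hb).2
          omega
        simp [wbase, hqF, this, hcard]
      have h2 : wbase C' a = C.QP.card + 1 := by
        have haF' : a ∉ C'.QF := by rw [hQF']; simp
        have : (C'.QP.filter fun b => C'.prP b ≤ C'.prP a) = C'.QP := by
          apply Finset.filter_true_of_mem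
          intro b hb
          rcases Finset.mem_insert.mp (hQP' ▸ hb) with hb' | hb'
          · rw [hb']
          · rw [hprP b hb', hprPq]
            have := (C.bijP.mapsTo hb').2
            omega
        rw [wbase, if_neg haF', this, hQP', Finset.card_insert_of_notMem hqP]
      rw [h1, h2]
    · rcases Finset.mem_union.mp ha with haF | haP
      · -- a ∈ QF, a ≠ q, so a ∈ QF'
        have haF' : a ∈ C'.QF := by rw [hQF']; exact Finset.mem_erase.mpr ⟨haq, haF⟩
        have hlt : C.prF a < C.prF q := by
          have h1 := (C.bijF.mapsTo haF).2
          have h2 : C.prF a ≠ C.prF q := fun h =>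
            haq (C.bijF.injOn haF hqF h)
          omega
        have key : (C'.QF.filter fun b => C'.prF b ≤ C'.prF a)
            = (C.QF.filter fun b => C.prF b ≤ C.prF a) := by
          ext b
          simp only [Finset.mem_filter, hQF', Finset.mem_erase]
          constructor
          · rintro ⟨⟨hbq, hbF⟩, hle⟩
            refine ⟨hbF, ?_⟩
            rw [← hprF b (hQF' ▸ Finset.mem_erase.mpr ⟨hbq, hbF⟩),
              ← hprF a haF']
            exact hle
          · rintro ⟨hbF, hle⟩
            have hbq : b ≠ q := by
              rintro rfl
              rw [hprq] at hlt
              have := (C.bijF.mapsTo haF).2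
              omega
            have hbF' : b ∈ C'.QF := by rw [hQF']; exact Finset.mem_erase.mpr ⟨hbq, hbF⟩
            exact ⟨⟨hbq, hbF⟩, by rw [hprF b hbF', hprF a haF']; exact hle⟩
        rw [wbase, wbase, if_pos haF', if_pos haF, key]
      · -- a ∈ QP
        have haq' : a ≠ q := fun h => hqP (h ▸ haP)
        have haF : a ∉ C.QF := Finset.disjoint_right.mp C.disj haP
        have haF' : a ∉ C'.QF := by
          rw [hQF']; exact fun h => haF (Finset.mem_of_mem_erase h)
        have haP' : a ∈ C'.QP := by rw [hQP']; exact Finset.mem_insert_of_mem haP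
        have hple : C.prP a ≤ C.QP.card := (C.bijP.mapsTo haP).2
        have key : (C'.QP.filter fun b => C'.prP b ≤ C'.prP a)
            = (C.QP.filter fun b => C.prP b ≤ C.prP a) := by
          ext b
          simp only [Finset.mem_filter, hQP', Finset.mem_insert]
          constructor
          · rintro ⟨hb, hle⟩
            rcases hb with rfl | hbP
            · rw [hprPq, hprP a haP] at hle; omega
            · exact ⟨hbP, by rw [hprP b hbP, hprP a haP] at hle; exact hle⟩
          · rintro ⟨hbP, hle⟩
            exact ⟨Or.inr hbP, by rw [hprP b hbP, hprP a haP]; exact hle⟩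
        rw [wbase, wbase, if_neg haF', if_neg haF, key]
  unfold cov
  rw [hU]
  refine Finset.sum_congr rfl fun a ha => ?_
  rw [hrem, hw a ha]
end
end

section
/- Run Algorithm 2 on an unweighted SPPT instance with distortion at most μ. If a job q is released at time t (the procedure UponJobRelease(q) is called), then for every real x ≥ 0 the covered volume does not decrease: cov(x, t) ≥ cov(x, t⁻). -/
open MeasureTheory
open scoped Classical

noncomputable section

variable {n : ℕ}

lemma unbot'_min_le {u : Finset ℕ} {m : ℕ} (d : ℕ) (hm : m ∈ u) :
    WithBot.unbotD d u.min ≤ m := by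
  obtain ⟨b, hb⟩ := Finset.min_of_mem hm
  have h := Finset.min_le hm
  rw [hb] at h ⊢
  exact (show b ≤ m by simpa using h)

lemma wbase_eq_prF (C : Config n) {a : Fin n} (ha : a ∈ C.QF) :
    wbase C a = C.prF a := by
  have hsub : ↑(C.QF.filter fun b => C.prF b ≤ C.prF a) ⊆ (C.QF : Set (Fin n)) := by
    intro b hb
    simpa using (Finset.mem_filter.mp hb).1
  have himg : (C.QF.filter fun b => C.prF b ≤ C.prF a).image C.prF
      = Finset.Icc 1 (C.prF a) := by
    apply Finset.ext; intro m
    simp only [Finset.mem_image, Finset.mem_filter, Finset.mem_Icc]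
    constructor
    · rintro ⟨b, ⟨hb, hle⟩, rfl⟩
      have h := C.bijF.mapsTo hb
      exact ⟨h.1, hle⟩
    · rintro ⟨h1, h2⟩
      have hm : m ∈ Set.Icc 1 C.QF.card :=
        ⟨h1, le_trans h2 (C.bijF.mapsTo ha).2⟩
      obtain ⟨b, hb, hbm⟩ := C.bijF.surjOn hm
      exact ⟨b, ⟨hb, by rw [hbm]; exact h2⟩, hbm⟩
  have hcard := Finset.card_image_of_injOn (C.bijF.injOn.mono hsub)
  rw [himg] at hcard
  have h1 : 1 ≤ C.prF a := (C.bijF.mapsTo ha).1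
  rw [wbase, if_pos ha, ← hcard, Nat.card_Icc]
  omega

/-- In a run of Algorithm 2 on an unweighted SPPT instance with
distortion at most `μ`, if a job `q` is released at time `t` (the procedure
`UponJobRelease(q)` is called; the jobs of the full bin, being full, have their whole
processing time remaining), then for every `x ≥ 0` the covered volume does not
decrease: `cov(x, t) ≥ cov(x, t⁻)`. -/
theorem release_cov_mono
    (n : ℕ) (μ : ℝ) (p pt : Fin n → ℝ)
    (hp : ∀ q, 0 < p q) (hpt : ∀ q, 0 < pt q)
    (hdist : ∀ q, pt q ≤ p q ∧ p q < μ * pt q)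
    (C C' : Config n) (q : Fin n)
    (hfull : ∀ a ∈ C.QF, C.rem a = p a)
    (hrem : ∀ a, 0 ≤ C.rem a)
    (hstep : ReleaseStep μ p pt C C' q) :
    ∀ x : ℝ, 0 ≤ x → cov C x ≤ cov C' x := by
  intro x hx
  obtain ⟨hqF, hqP, hQF', hQP', hremq, hremo, hprF', hprP'⟩ := hstep
  set pr' := rotatedPr μ pt C q with hpr'
  have hqF'mem : q ∈ C'.QF := by rw [hQF']; exact Finset.mem_insert_self _ _
  have hmemF' : ∀ a ∈ C.QF, a ∈ C'.QF := fun a ha => by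
    rw [hQF']; exact Finset.mem_insert_of_mem ha
  -- facts about rotatedPr
  have hq_le : ∀ b ∈ C.QF.filter (fun b => μ * pt b ≤ pt q), pr' q ≤ C.prF b := by
    intro b hb
    simp only [hpr', rotatedPr, if_pos rfl]
    exact unbot'_min_le _ (Finset.mem_image_of_mem _ hb)
  have hS_le : ∀ a ∈ C.QF.filter (fun b => μ * pt b ≤ pt q),
      ∀ b ∈ C.QF.filter (fun b => μ * pt b ≤ pt q),
      C.prF a < C.prF b → pr' a ≤ C.prF b := by
    intro a ha b hb hab
    have haq : a ≠ q := fun h => hqF (h ▸ (Finset.mem_filter.mp ha).1)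
    simp only [hpr', rotatedPr, if_neg haq, if_pos ha]
    exact unbot'_min_le _
      (Finset.mem_image_of_mem _ (Finset.mem_filter.mpr ⟨hb, hab⟩))
  have hnotS : ∀ a ∈ C.QF, a ∉ C.QF.filter (fun b => μ * pt b ≤ pt q) →
      pr' a = C.prF a := by
    intro a ha hna
    have haq : a ≠ q := fun h => hqF (h ▸ ha)
    simp only [hpr', rotatedPr, if_neg haq, if_neg hna]
  have hpS : ∀ b ∈ C.QF.filter (fun b => μ * pt b ≤ pt q), p b ≤ p q := by
    intro b hb
    have h1 : μ * pt b ≤ pt q := (Finset.mem_filter.mp hb).2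
    have h2 := hdist b
    have h3 := (hdist q).1
    linarith
  -- decompose cov
  have hdisj' := C'.disj
  rw [cov, cov, Finset.sum_union C.disj, Finset.sum_union C'.disj]
  have hQP : (∑ a ∈ C.QP, if (wbase C a : ℝ) ≤ x then C.rem a else 0)
      = ∑ a ∈ C'.QP, if (wbase C' a : ℝ) ≤ x then C'.rem a else 0 := by
    rw [hQP']
    refine Finset.sum_congr rfl ?_
    intro a ha
    have haq : a ≠ q := fun h => hqP (h ▸ ha)
    have haF : a ∉ C.QF := Finset.disjoint_right.mp C.disj ha
    have haF' : a ∉ C'.QF := by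
      rw [hQF']; simp [haq, haF]
    have hwb : wbase C' a = wbase C a := by
      rw [wbase, wbase, if_neg haF, if_neg haF', hQP']
      refine congrArg Finset.card (Finset.filter_congr ?_)
      intro b hb
      rw [hprP' b hb, hprP' a ha]
    rw [hwb, hremo a haq]
  rw [hQP]
  gcongr ?_ + _
  -- QF sums
  have hLHS : (∑ a ∈ C.QF, if (wbase C a : ℝ) ≤ x then C.rem a else 0)
      = ∑ a ∈ C.QF, if (C.prF a : ℝ) ≤ x then p a else 0 := by
    refine Finset.sum_congr rfl ?_
    intro a ha
    rw [wbase_eq_prF C ha, hfull a ha]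
  have hRHS : (∑ a ∈ C'.QF, if (wbase C' a : ℝ) ≤ x then C'.rem a else 0)
      = ∑ a ∈ insert q C.QF, if (pr' a : ℝ) ≤ x then p a else 0 := by
    rw [← hQF']
    refine Finset.sum_congr rfl ?_
    intro a ha
    have hw : wbase C' a = pr' a := by
      rw [wbase_eq_prF C' ha, hprF' a ha]
    have hr : C'.rem a = p a := by
      by_cases haq : a = q
      · rw [haq, hremq]
      · have haF : a ∈ C.QF := by
          rw [hQF'] at ha
          rcases Finset.mem_insert.mp ha with h | h
          · exact absurd h haq
          · exact h
        rw [hremo a haq, hfull a haF]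
    rw [hw, hr]
  rw [hLHS, hRHS, ← Finset.sum_filter, ← Finset.sum_filter]
  set s := C.QF.filter (fun a => (C.prF a : ℝ) ≤ x) with hs
  set t := (insert q C.QF).filter (fun a => (pr' a : ℝ) ≤ x) with ht
  set φ : Fin n → Fin n := fun a => if (pr' a : ℝ) ≤ x then a else q with hφ
  have hsQF : ∀ a ∈ s, a ∈ C.QF := fun a ha => (Finset.mem_filter.mp ha).1
  have hsx : ∀ a ∈ s, (C.prF a : ℝ) ≤ x := fun a ha => (Finset.mem_filter.mp ha).2
  have hover : ∀ a ∈ s, ¬ (pr' a : ℝ) ≤ x →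
      a ∈ C.QF.filter (fun b => μ * pt b ≤ pt q) := by
    intro a ha hna
    by_contra hcon
    exact hna (by rw [hnotS a (hsQF a ha) hcon]; exact hsx a ha)
  have hmaps : ∀ a ∈ s, φ a ∈ t := by
    intro a ha
    by_cases h1 : (pr' a : ℝ) ≤ x
    · simp only [hφ, if_pos h1]
      exact Finset.mem_filter.mpr ⟨Finset.mem_insert_of_mem (hsQF a ha), h1⟩
    · simp only [hφ, if_neg h1]
      have haS := hover a ha h1
      have hle : (pr' q : ℝ) ≤ x :=
        le_trans (by exact_mod_cast hq_le a haS) (hsx a ha)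
      exact Finset.mem_filter.mpr ⟨Finset.mem_insert_self _ _, hle⟩
  have hinj : ∀ a ∈ s, ∀ b ∈ s, φ a = φ b → a = b := by
    intro a ha b hb hab
    by_cases h1 : (pr' a : ℝ) ≤ x <;> by_cases h2 : (pr' b : ℝ) ≤ x
    · simpa only [hφ, if_pos h1, if_pos h2] using hab
    · simp only [hφ, if_pos h1, if_neg h2] at hab
      exact absurd (hab ▸ hsQF a ha) hqF
    · simp only [hφ, if_neg h1, if_pos h2] at hab
      exact absurd (hab ▸ hsQF b hb) hqF
    · have haS := hover a ha h1
      have hbS := hover b hb h2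
      rcases Nat.lt_trichotomy (C.prF a) (C.prF b) with h | h | h
      · exact absurd (le_trans (by exact_mod_cast hS_le a haS b hbS h) (hsx b hb)) h1
      · exact C.bijF.injOn (hsQF a ha) (hsQF b hb) h
      · exact absurd (le_trans (by exact_mod_cast hS_le b hbS a haS h) (hsx a ha)) h2
  calc ∑ a ∈ s, p a ≤ ∑ a ∈ s, p (φ a) := by
        refine Finset.sum_le_sum ?_
        intro a ha
        by_cases h1 : (pr' a : ℝ) ≤ x
        · simp [hφ, if_pos h1]
        · simp only [hφ, if_neg h1]
          exact hpS a (hover a ha h1)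
    _ = ∑ b ∈ s.image φ, p b := (Finset.sum_image hinj).symm
    _ ≤ ∑ b ∈ t, p b := by
        refine Finset.sum_le_sum_of_subset_of_nonneg ?_ (fun b _ _ => (hp b).le)
        intro b hb
        obtain ⟨a, ha, rfl⟩ := Finset.mem_image.mp hb
        exact hmaps a ha
end
end

section
/- Run Algorithm 2 on an unweighted SPPT instance with distortion at most μ. At every time outside of the execution of the procedures UponJobRelease and UponHeavyF, no ordered pair of jobs in bin F forms a violation; that is, there are no jobs q₁, q₂ in Q_F with π_F(q₁) > π_F(q₂) and μ·p̃(q₂) ≤ p̃(q₁). -/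
open MeasureTheory
open scoped Classical

noncomputable section

variable {n : ℕ}

/-- The configurations reachable by Algorithm 2 (run steps in arbitrary order from the
empty configuration, releases/moves/processing/completions). -/
inductive Reachable {n : ℕ} (μ : ℝ) (p pt : Fin n → ℝ) : Config n → Prop
  | init (C : Config n) (hF : C.QF = ∅) (hP : C.QP = ∅) : Reachable μ p pt C
  | release (C C' : Config n) (q : Fin n) (h : Reachable μ p pt C)
      (hs : ReleaseStep μ p pt C C' q) : Reachable μ p pt C'
  | move (C C' : Config n) (q : Fin n) (h : Reachable μ p pt C)
      (hs : MoveStep C C' q) : Reachable μ p pt C'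
  | process (C C' : Config n) (q : Fin n) (d : ℝ) (h : Reachable μ p pt C)
      (hs : ProcessStep C C' q d) : Reachable μ p pt C'
  | complete (C C' : Config n) (q : Fin n) (h : Reachable μ p pt C)
      (hs : CompleteStep C C' q) : Reachable μ p pt C'

lemma min_image_cases {n : ℕ} (f : Fin n → ℕ) (s : Finset (Fin n)) (d : ℕ) :
    (s = ∅ ∧ WithBot.unbotD d (s.image f).min = d) ∨
    ∃ b ∈ s, WithBot.unbotD d (s.image f).min = f b ∧ ∀ c ∈ s, f b ≤ f c := by
  rcases s.eq_empty_or_nonempty with h | h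
  · left; subst h; exact ⟨rfl, rfl⟩
  · right
    have himg : (s.image f).Nonempty := h.image f
    obtain ⟨b, hb, hfb⟩ := Finset.mem_image.mp ((s.image f).min'_mem himg)
    refine ⟨b, hb, ?_, ?_⟩
    · rw [hfb, ← Finset.coe_min' himg]; rfl
    · intro c hc
      rw [hfb]
      exact Finset.min'_le _ _ (Finset.mem_image_of_mem f hc)

/-- In a run of Algorithm 2 on an unweighted SPPT instance with
distortion at most `μ`, at every time outside of the execution of the procedures
(i.e. in every reachable configuration) no ordered pair of jobs of the full bin
forms a violation. -/
theorem no_violations_invariant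
    (n : ℕ) (μ : ℝ) (p pt : Fin n → ℝ)
    (hp : ∀ q, 0 < p q) (hpt : ∀ q, 0 < pt q)
    (hdist : ∀ q, pt q ≤ p q ∧ p q < μ * pt q)
    (C : Config n) (h : Reachable μ p pt C) :
    NoViolations μ pt C := by
  induction h with
  | init C hF hP =>
      intro q1 q2 hv
      exact absurd (hF ▸ hv.1) (Finset.notMem_empty _)
  | release C C' q h hs ih =>
      obtain ⟨hqF, hqP, hQF, hQP, _, _, hpr, _⟩ := hs
      have hμ : 1 < μ := by
        have h1 := (hdist q).1; have h2 := (hdist q).2; have h3 := hpt q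
        nlinarith
      set S := C.QF.filter (fun b => μ * pt b ≤ pt q) with hS
      set rot := rotatedPr μ pt C q with hrot
      have hcard : ∀ a ∈ C.QF, C.prF a ≤ C.QF.card := fun a ha => (C.bijF.mapsTo ha).2
      -- rot q
      have hrotq : (S = ∅ ∧ rot q = C.QF.card + 1) ∨
          ∃ b ∈ S, rot q = C.prF b ∧ ∀ c ∈ S, C.prF b ≤ C.prF c := by
        have : rot q = WithBot.unbotD (C.QF.card + 1) (S.image C.prF).min := by
          rw [hrot]; simp [rotatedPr]; rfl
        rw [this]
        exact min_image_cases _ _ _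
      -- rot a for a ∈ S
      have hrotS : ∀ a ∈ S, rot a =
          WithBot.unbotD (C.QF.card + 1)
            (((S.filter fun b => C.prF a < C.prF b).image C.prF).min) := by
        intro a ha
        have haq : a ≠ q := fun hh => hqF (by
          have := (Finset.mem_filter.mp ha).1; rwa [hh] at this)
        rw [hrot]
        simp only [rotatedPr, if_neg haq]
        rw [if_pos ha]
      have hgt : ∀ a ∈ S, C.prF a < rot a := by
        intro a ha
        have haF : a ∈ C.QF := (Finset.mem_filter.mp ha).1
        rw [hrotS a ha]
        rcases min_image_cases C.prF (S.filter fun b => C.prF a < C.prF b)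
            (C.QF.card + 1) with ⟨_, he⟩ | ⟨b, hb, he, _⟩
        · rw [he]; exact Nat.lt_succ_of_le (hcard a haF)
        · rw [he]; exact (Finset.mem_filter.mp hb).2
      have hmono : ∀ a ∈ S, ∀ b ∈ S, C.prF a < C.prF b → rot a ≤ C.prF b := by
        intro a ha b hb hab
        rw [hrotS a ha]
        have hbmem : b ∈ S.filter fun c => C.prF a < C.prF c :=
          Finset.mem_filter.mpr ⟨hb, hab⟩
        rcases min_image_cases C.prF (S.filter fun c => C.prF a < C.prF c)
            (C.QF.card + 1) with ⟨he, _⟩ | ⟨b0, hb0, he, hmin⟩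
        · rw [he] at hbmem; exact absurd hbmem (Finset.notMem_empty _)
        · rw [he]; exact hmin b hbmem
      have heqn : ∀ a ∈ C.QF, a ∉ S → rot a = C.prF a := by
        intro a ha haS
        have haq : a ≠ q := fun hh => hqF (hh ▸ ha)
        rw [hrot]
        simp only [rotatedPr, if_neg haq]
        rw [if_neg haS]
      intro q1 q2 hv
      obtain ⟨h1, h2, hlt, hle⟩ := hv
      rw [hQF] at h1 h2
      rw [hpr q1 (by rw [hQF]; exact h1), hpr q2 (by rw [hQF]; exact h2)] at hlt
      rcases Finset.mem_insert.mp h1 with rfl | h1F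
      · rcases Finset.mem_insert.mp h2 with rfl | h2F
        · exact lt_irrefl _ hlt
        · -- q1 = q, q2 ∈ QF, μ pt q2 ≤ pt q ⇒ q2 ∈ S
          have h2S : q2 ∈ S := Finset.mem_filter.mpr ⟨h2F, hle⟩
          rcases hrotq with ⟨he, _⟩ | ⟨b, hb, he, hmin⟩
          · rw [he] at h2S; exact absurd h2S (Finset.notMem_empty _)
          · have : rot q1 ≤ C.prF q2 := by rw [he]; exact hmin q2 h2S
            exact absurd hlt (not_lt.mpr (le_trans this (le_of_lt (hgt q2 h2S))))
      · rcases Finset.mem_insert.mp h2 with rfl | h2F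
        · -- q2 = q, q1 ∈ QF
          have h1S : q1 ∉ S := by
            intro hh
            have := (Finset.mem_filter.mp hh).2
            have h3 := hpt q1; have h4 := hpt q2
            nlinarith
          have hr1 : rot q1 = C.prF q1 := heqn q1 h1F h1S
          rw [hr1] at hlt
          rcases hrotq with ⟨_, he⟩ | ⟨b, hb, he, _⟩
          · rw [he] at hlt
            exact absurd hlt (not_lt.mpr (Nat.le_succ_of_le (hcard q1 h1F)))
          · have hbF : b ∈ C.QF := (Finset.mem_filter.mp hb).1
            have hbv : μ * pt b ≤ pt q1 := by
              have := (Finset.mem_filter.mp hb).2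
              have h3 := hpt q2; have h4 := hpt b
              nlinarith
            have hbq1 : ¬ C.prF b < C.prF q1 := fun hh =>
              ih q1 b ⟨h1F, hbF, hh, hbv⟩
            rw [he] at hlt
            exact hbq1 hlt
        · -- q1, q2 ∈ QF
          by_cases h1S : q1 ∈ S
          · by_cases h2S : q2 ∈ S
            · have hnold : ¬ C.prF q2 < C.prF q1 := fun hh =>
                ih q1 q2 ⟨h1F, h2F, hh, hle⟩
              rcases lt_or_eq_of_le (not_lt.mp hnold) with hh | hh
              · exact absurd hlt (not_lt.mpr (le_trans (hmono q1 h1S q2 h2S hh)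
                  (le_of_lt (hgt q2 h2S))))
              · have : q1 = q2 := C.bijF.injOn h1F h2F hh
                rw [this] at hlt
                exact lt_irrefl _ hlt
            · -- q2 ∉ S but μ pt q2 ≤ pt q1 ≤ stuff ≤ pt q, contradiction
              have h2S' : q2 ∈ S := by
                refine Finset.mem_filter.mpr ⟨h2F, ?_⟩
                have := (Finset.mem_filter.mp h1S).2
                have h3 := hpt q1
                nlinarith
              exact h2S h2S'
          · have hr1 : rot q1 = C.prF q1 := heqn q1 h1F h1S
            have hlt2 : C.prF q2 < C.prF q1 := by
              by_cases h2S : q2 ∈ S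
              · rw [hr1] at hlt
                exact lt_trans (hgt q2 h2S) hlt
              · rw [hr1, heqn q2 h2F h2S] at hlt
                exact hlt
            exact ih q1 q2 ⟨h1F, h2F, hlt2, hle⟩
  | move C C' q h hs ih =>
      obtain ⟨_, _, _, hQF, _, _, hpr, _, _⟩ := hs
      intro q1 q2 hv
      obtain ⟨h1, h2, hlt, hle⟩ := hv
      rw [hpr q1 h1, hpr q2 h2] at hlt
      rw [hQF] at h1 h2
      exact ih q1 q2 ⟨Finset.mem_of_mem_erase h1, Finset.mem_of_mem_erase h2, hlt, hle⟩
  | process C C' q d h hs ih =>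
      obtain ⟨_, _, _, _, _, hQF, _, hpr, _, _, _⟩ := hs
      intro q1 q2 hv
      obtain ⟨h1, h2, hlt, hle⟩ := hv
      rw [hQF] at h1 h2
      rw [hpr] at hlt
      exact ih q1 q2 ⟨h1, h2, hlt, hle⟩
  | complete C C' q h hs ih =>
      obtain ⟨_, _, _, hQF, _, hpr, _, _⟩ := hs
      intro q1 q2 hv
      obtain ⟨h1, h2, hlt, hle⟩ := hv
      rw [hQF] at h1 h2
      rw [hpr] at hlt
      exact ih q1 q2 ⟨h1, h2, hlt, hle⟩
end
end

section
/- Run Algorithm 2 on an unweighted SPPT instance with distortion at most μ, and let θ = ⌈μ²⌉. If a job q is released at time t (the procedure UponJobRelease(q) is called), then for every real x ≥ 0: cov(x + θ, t) ≥ cov(x, t⁻) + p(q). -/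
open MeasureTheory
open scoped Classical

noncomputable section

variable {n : ℕ}


private lemma minUnbot_le {t : Finset ℕ} {b d : ℕ} (h : b ∈ t) :
    WithBot.unbotD d t.min ≤ b := by
  obtain ⟨v, hv⟩ := Finset.min_of_mem h
  have hle : t.min ≤ (b : WithTop ℕ) := Finset.min_le h
  rw [hv] at hle ⊢
  show v ≤ b
  exact WithTop.coe_le_coe.mp hle

private lemma minUnbot_cases (t : Finset ℕ) (d : ℕ) :
    WithBot.unbotD d t.min = d ∨ WithBot.unbotD d t.min ∈ t := by
  rcases t.eq_empty_or_nonempty with h | ⟨a, ha⟩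
  · left; rw [h]; rfl
  · obtain ⟨v, hv⟩ := Finset.min_of_mem ha
    right
    rw [hv]
    show v ∈ t
    exact Finset.mem_of_min hv

private lemma minUnbot_mono {t s : Finset ℕ} {d : ℕ} (hts : t ⊆ s)
    (hd : ∀ b ∈ s, b ≤ d) :
    WithBot.unbotD d s.min ≤ WithBot.unbotD d t.min := by
  rcases minUnbot_cases t d with h | h
  · rw [h]
    rcases minUnbot_cases s d with h' | h'
    · rw [h']
    · exact hd _ h'
  · exact minUnbot_le (hts h)

private lemma minUnbot_image_le {s : Finset (Fin n)} {f : Fin n → ℕ} {b : Fin n} {d : ℕ}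
    (hb : b ∈ s) : WithBot.unbotD d ((s.image f).min) ≤ f b :=
  minUnbot_le (Finset.mem_image_of_mem f hb)

private lemma minUnbot_image_mono {t s : Finset (Fin n)} {f : Fin n → ℕ} {d : ℕ}
    (hts : t ⊆ s) (hd : ∀ b ∈ s, f b ≤ d) :
    WithBot.unbotD d ((s.image f).min) ≤ WithBot.unbotD d ((t.image f).min) := by
  apply minUnbot_mono (Finset.image_subset_image hts)
  intro v hv
  obtain ⟨b, hb, rfl⟩ := Finset.mem_image.mp hv
  exact hd b hb

private lemma core_gain
    (μ : ℝ) (p pt : Fin n → ℝ) (q : Fin n)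
    (F : Finset (Fin n)) (f g : Fin n → ℕ) (k θ : ℕ)
    (hbij : Set.BijOn f (F : Set (Fin n)) (Set.Icc 1 F.card))
    (hq : q ∉ F)
    (hμ : 1 < μ)
    (hθμ : μ ^ 2 ≤ (θ : ℝ))
    (hp : ∀ r, 0 < p r) (hpt : ∀ r, 0 < pt r)
    (hdist : ∀ r, pt r ≤ p r ∧ p r < μ * pt r)
    (hgq : g q = WithBot.unbotD (F.card + 1)
      (((F.filter fun b => μ * pt b ≤ pt q).image f).min))
    (hgS : ∀ a ∈ F, μ * pt a ≤ pt q → g a = WithBot.unbotD (F.card + 1)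
      ((((F.filter fun b => μ * pt b ≤ pt q).filter fun b => f a < f b).image f).min))
    (hgNS : ∀ a ∈ F, ¬ (μ * pt a ≤ pt q) → g a = f a) :
    (∑ a ∈ F.filter (fun a => f a ≤ k), p a) + p q
      ≤ ∑ a ∈ (insert q F).filter (fun a => g a ≤ k + θ), p a := by
  classical
  set S := F.filter (fun b => μ * pt b ≤ pt q) with hS
  have hSsub : S ⊆ F := Finset.filter_subset _ _
  have hfle : ∀ b ∈ F, 1 ≤ f b ∧ f b ≤ F.card := by
    intro b hb
    have := hbij.mapsTo hb
    simpa using this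
  have hdS : ∀ b ∈ S, f b ≤ F.card + 1 :=
    fun b hb => (hfle b (hSsub hb)).2.trans (Nat.le_succ _)
  have himg : F.image f = Finset.Icc 1 F.card := by
    apply Finset.coe_injective
    rw [Finset.coe_image, Finset.coe_Icc]
    exact hbij.image_eq
  set O := F.filter (fun a => f a ≤ k) with hO
  set N := (insert q F).filter (fun a => g a ≤ k + θ) with hN
  have hqO : q ∉ O := fun h => hq (Finset.filter_subset _ _ h)
  set Sk := S.filter (fun b => k < f b) with hSk
  by_cases hcase : WithBot.unbotD (F.card + 1) ((Sk.image f).min) ≤ k + θ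
  · -- Case 1: everything fits
    have hsub : insert q O ⊆ N := by
      intro a ha
      rcases Finset.mem_insert.mp ha with rfl | haO
      · refine Finset.mem_filter.mpr ⟨Finset.mem_insert_self _ _, ?_⟩
        rw [hgq]
        exact le_trans (minUnbot_image_mono (Finset.filter_subset _ _) hdS) hcase
      · obtain ⟨haF, hak⟩ := Finset.mem_filter.mp haO
        refine Finset.mem_filter.mpr ⟨Finset.mem_insert_of_mem haF, ?_⟩
        by_cases haS : μ * pt a ≤ pt q
        · rw [hgS a haF haS]
          have hsub2 : Sk ⊆ S.filter (fun b => f a < f b) := by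
            intro b hb
            obtain ⟨hbS, hbk⟩ := Finset.mem_filter.mp hb
            exact Finset.mem_filter.mpr ⟨hbS, lt_of_le_of_lt hak hbk⟩
          have hd2 : ∀ b ∈ S.filter (fun b => f a < f b), f b ≤ F.card + 1 :=
            fun b hb => hdS b (Finset.mem_filter.mp hb).1
          exact le_trans (minUnbot_image_mono hsub2 hd2) hcase
        · rw [hgNS a haF haS]; omega
    calc (∑ a ∈ O, p a) + p q = ∑ a ∈ insert q O, p a := by
          rw [Finset.sum_insert hqO]; ring
      _ ≤ ∑ a ∈ N, p a :=
          Finset.sum_le_sum_of_subset_of_nonneg hsub (fun a _ _ => (hp a).le)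
  · -- Case 2
    push_neg at hcase
    have hmk : k + θ ≤ F.card := by
      rcases minUnbot_cases (Sk.image f) (F.card + 1) with h | h
      · omega
      · obtain ⟨b, hb, hfb⟩ := Finset.mem_image.mp h
        have := (hfle b (hSsub (Finset.filter_subset _ _ hb))).2
        omega
    set E := F.filter (fun c => k < f c ∧ f c ≤ k + θ) with hE
    have hES : ∀ c ∈ E, ¬ (μ * pt c ≤ pt q) := by
      intro c hc hcS
      obtain ⟨hcF, hck⟩ := Finset.mem_filter.mp hc
      have hcSk : c ∈ Sk :=
        Finset.mem_filter.mpr ⟨Finset.mem_filter.mpr ⟨hcF, hcS⟩, hck.1⟩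
      have := minUnbot_image_le (f := f) (d := F.card + 1) hcSk
      omega
    have hEN : E ⊆ N := by
      intro c hc
      obtain ⟨hcF, hck⟩ := Finset.mem_filter.mp hc
      refine Finset.mem_filter.mpr ⟨Finset.mem_insert_of_mem hcF, ?_⟩
      rw [hgNS c hcF (hES c hc)]
      exact hck.2
    have hcardE : E.card = θ := by
      have hinj : Set.InjOn f ↑(F.filter fun a => k < f a ∧ f a ≤ k + θ) :=
        hbij.injOn.mono (Finset.coe_subset.mpr (Finset.filter_subset _ _))
      have h1 : E.card = (E.image f).card := (Finset.card_image_of_injOn hinj).symm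
      rw [hE] at h1 ⊢
      rw [h1, ← Finset.filter_image (p := fun v => k < v ∧ v ≤ k + θ), himg]
      have h2 : (Finset.Icc 1 F.card).filter (fun v => k < v ∧ v ≤ k + θ)
          = Finset.Icc (k + 1) (k + θ) := by
        ext v
        simp only [Finset.mem_filter, Finset.mem_Icc]
        omega
      rw [h2, Nat.card_Icc]
      omega
    have hdisjOE : Disjoint O E := by
      rw [Finset.disjoint_left]
      intro a haO haE
      have h1 := (Finset.mem_filter.mp haO).2
      have h2 := (Finset.mem_filter.mp haE).2
      omega
    have hEvol : p q ≤ ∑ c ∈ E, p c := by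
      have h1 : ∀ c ∈ E, p q / μ ^ 2 ≤ p c := by
        intro c hc
        have hcS := hES c hc
        push_neg at hcS
        rw [div_le_iff₀ (by positivity)]
        nlinarith [(hdist q).2, (hdist c).1, hpt c, hpt q]
      have h2 := Finset.card_nsmul_le_sum E p (p q / μ ^ 2) h1
      rw [hcardE, nsmul_eq_mul] at h2
      have h4 : μ ^ 2 * (p q / μ ^ 2) = p q := by field_simp
      nlinarith [hp q, div_nonneg (hp q).le (sq_nonneg μ)]
    set OS := S.filter (fun b => f b ≤ k) with hOS
    rcases OS.eq_empty_or_nonempty with hOSe | hOSne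
    · -- no S-job among old covered
      have hON : O ⊆ N := by
        intro a haO
        obtain ⟨haF, hak⟩ := Finset.mem_filter.mp haO
        have haS : ¬ (μ * pt a ≤ pt q) := by
          intro h
          have : a ∈ OS :=
            Finset.mem_filter.mpr ⟨Finset.mem_filter.mpr ⟨haF, h⟩, hak⟩
          rw [hOSe] at this
          exact absurd this (Finset.notMem_empty a)
        refine Finset.mem_filter.mpr ⟨Finset.mem_insert_of_mem haF, ?_⟩
        rw [hgNS a haF haS]
        omega
      have hle := Finset.sum_le_sum_of_subset_of_nonneg
        (Finset.union_subset hON hEN) (fun a (_ : a ∈ N) _ => (hp a).le)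
      rw [Finset.sum_union hdisjOE] at hle
      linarith
    · obtain ⟨b, hbOS, hbmax⟩ := Finset.exists_max_image OS f hOSne
      obtain ⟨hbS, hbk⟩ := Finset.mem_filter.mp hbOS
      have hbF := hSsub hbS
      have hbO : b ∈ O := Finset.mem_filter.mpr ⟨hbF, hbk⟩
      have hqN : q ∈ N := by
        refine Finset.mem_filter.mpr ⟨Finset.mem_insert_self _ _, ?_⟩
        rw [hgq]
        have := minUnbot_image_le (f := f) (d := F.card + 1) hbS
        omega
      have hsub : insert q ((O.erase b) ∪ E) ⊆ N := by
        intro a ha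
        rcases Finset.mem_insert.mp ha with rfl | ha
        · exact hqN
        rcases Finset.mem_union.mp ha with haO | haE
        · obtain ⟨hab, haO⟩ := Finset.mem_erase.mp haO
          obtain ⟨haF, hak⟩ := Finset.mem_filter.mp haO
          refine Finset.mem_filter.mpr ⟨Finset.mem_insert_of_mem haF, ?_⟩
          by_cases haS : μ * pt a ≤ pt q
          · rw [hgS a haF haS]
            have haOS : a ∈ OS :=
              Finset.mem_filter.mpr ⟨Finset.mem_filter.mpr ⟨haF, haS⟩, hak⟩
            have hfab : f a < f b :=
              lt_of_le_of_ne (hbmax a haOS)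
                (fun h => hab (hbij.injOn haF hbF h))
            have hbmem : b ∈ S.filter (fun c => f a < f c) :=
              Finset.mem_filter.mpr ⟨hbS, hfab⟩
            have := minUnbot_image_le (f := f) (d := F.card + 1) hbmem
            omega
          · rw [hgNS a haF haS]
            omega
        · exact hEN haE
      have hqmem : q ∉ (O.erase b) ∪ E := by
        intro h
        rcases Finset.mem_union.mp h with h | h
        · exact hq (Finset.filter_subset _ _ (Finset.erase_subset _ _ h))
        · exact hq (Finset.filter_subset _ _ h)
      have hdisj' : Disjoint (O.erase b) E :=
        Finset.disjoint_of_subset_left (Finset.erase_subset _ _) hdisjOE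
      have hle := Finset.sum_le_sum_of_subset_of_nonneg hsub
        (fun a (_ : a ∈ N) _ => (hp a).le)
      rw [Finset.sum_insert hqmem, Finset.sum_union hdisj'] at hle
      have herase : (∑ a ∈ O.erase b, p a) + p b = ∑ a ∈ O, p a :=
        Finset.sum_erase_add O p hbO
      have hpb : p b ≤ p q := by
        have hbSpred : μ * pt b ≤ pt q := (Finset.mem_filter.mp hbS).2
        linarith [(hdist b).2, (hdist q).1]
      linarith

private lemma card_filter_pred_eq (j : ℕ) :
    ∀ {B : Finset (Fin n)} {f : Fin n → ℕ},
      Set.BijOn f (B : Set (Fin n)) (Set.Icc 1 B.card) →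
      ∀ a ∈ B, f a = j → (B.filter fun b => f b ≤ j).card = j := by
  intro B f hbij a ha hfa
  have hj : 1 ≤ j ∧ j ≤ B.card := by
    have := hbij.mapsTo ha
    rw [hfa] at this
    simpa using this
  have himg : B.image f = Finset.Icc 1 B.card := by
    apply Finset.coe_injective
    rw [Finset.coe_image, Finset.coe_Icc]
    exact hbij.image_eq
  have hinj : Set.InjOn f ↑(B.filter fun b => f b ≤ j) :=
    hbij.injOn.mono (Finset.coe_subset.mpr (Finset.filter_subset _ _))
  rw [← Finset.card_image_of_injOn hinj,
    ← Finset.filter_image (p := fun v => v ≤ j), himg]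
  have h2 : (Finset.Icc 1 B.card).filter (fun v => v ≤ j) = Finset.Icc 1 j := by
    ext v
    simp only [Finset.mem_filter, Finset.mem_Icc]
    omega
  rw [h2, Nat.card_Icc]
  omega

private lemma wbase_F {C : Config n} {a : Fin n} (ha : a ∈ C.QF) :
    wbase C a = C.prF a := by
  rw [wbase, if_pos ha]
  exact card_filter_pred_eq (C.prF a) C.bijF a ha rfl

private lemma wbase_P {C : Config n} {a : Fin n} (ha : a ∈ C.QP) :
    wbase C a = C.prP a := by
  have haF : a ∉ C.QF := Finset.disjoint_right.mp C.disj ha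
  rw [wbase, if_neg haF]
  exact card_filter_pred_eq (C.prP a) C.bijP a ha rfl

private lemma cov_eq (C : Config n) (x : ℝ) :
    cov C x = (∑ a ∈ C.QF, if (C.prF a : ℝ) ≤ x then C.rem a else 0)
            + (∑ a ∈ C.QP, if (C.prP a : ℝ) ≤ x then C.rem a else 0) := by
  rw [cov, Finset.sum_union C.disj]
  congr 1
  · exact Finset.sum_congr rfl fun a ha => by rw [wbase_F ha]
  · exact Finset.sum_congr rfl fun a ha => by rw [wbase_P ha]

/-- In a run of Algorithm 2 on an unweighted SPPT instance with
distortion at most `μ` (so that, by Proposition `UW_NoViolations`, the configuration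
just before a release contains no violations, and the jobs of the full bin are full),
if a job `q` is released at time `t` then, with `θ = ⌈μ²⌉`, for every `x ≥ 0`:
`cov(x + θ, t) ≥ cov(x, t⁻) + p(q)`. -/
theorem release_cov_gain
    (n : ℕ) (μ : ℝ) (p pt : Fin n → ℝ)
    (hp : ∀ q, 0 < p q) (hpt : ∀ q, 0 < pt q)
    (hdist : ∀ q, pt q ≤ p q ∧ p q < μ * pt q)
    (C C' : Config n) (q : Fin n)
    (hfull : ∀ a ∈ C.QF, C.rem a = p a)
    (hrem : ∀ a, 0 ≤ C.rem a)
    (hnv : NoViolations μ pt C)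
    (hstep : ReleaseStep μ p pt C C' q) :
    ∀ x : ℝ, 0 ≤ x → cov C x + p q ≤ cov C' (x + ((⌈μ ^ 2⌉ : ℤ) : ℝ)) := by
    classical
  obtain ⟨hqF, hqP, hQF', hQP', hremq, hrema, hprF', hprP'⟩ := hstep
  intro x hx
  have hμ : 1 < μ := by nlinarith [hpt q, (hdist q).1, (hdist q).2]
  have hcast : ((⌈μ ^ 2⌉ : ℤ) : ℝ) = ((⌈μ ^ 2⌉₊ : ℕ) : ℝ) :=
    (natCast_ceil_eq_intCast_ceil (by positivity)).symm
  rw [hcast, cov_eq, cov_eq]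
  have hθ0 : (0 : ℝ) ≤ ((⌈μ ^ 2⌉₊ : ℕ) : ℝ) := Nat.cast_nonneg _
  have hkx : ((⌊x⌋₊ : ℕ) : ℝ) ≤ x := Nat.floor_le hx
  -- partial-bin part
  have hP : (∑ a ∈ C.QP, if (C.prP a : ℝ) ≤ x then C.rem a else 0)
      ≤ ∑ a ∈ C'.QP, if (C'.prP a : ℝ) ≤ x + ((⌈μ ^ 2⌉₊ : ℕ) : ℝ)
          then C'.rem a else 0 := by
    rw [hQP']
    apply Finset.sum_le_sum
    intro a ha
    have hne : a ≠ q := fun h => hqP (h ▸ ha)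
    rw [hprP' a ha, hrema a hne]
    split_ifs with h1 h2
    · exact le_rfl
    · exact absurd (by linarith) h2
    · exact hrem a
    · exact le_rfl
  -- full-bin part
  have hL : (∑ a ∈ C.QF, if (C.prF a : ℝ) ≤ x then C.rem a else 0)
      = ∑ a ∈ C.QF.filter (fun a => C.prF a ≤ ⌊x⌋₊), p a := by
    rw [Finset.sum_filter]
    apply Finset.sum_congr rfl
    intro a ha
    rw [hfull a ha]
    congr 1
    simp only [eq_iff_iff]
    exact (Nat.le_floor_iff hx).symm
  have hR : (∑ a ∈ (insert q C.QF).filter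
        (fun a => rotatedPr μ pt C q a ≤ ⌊x⌋₊ + ⌈μ ^ 2⌉₊), p a)
      ≤ ∑ a ∈ C'.QF, if (C'.prF a : ℝ) ≤ x + ((⌈μ ^ 2⌉₊ : ℕ) : ℝ)
          then C'.rem a else 0 := by
    rw [hQF', Finset.sum_filter]
    apply Finset.sum_le_sum
    intro a ha
    have hpra : C'.prF a = rotatedPr μ pt C q a := hprF' a (hQF' ▸ ha)
    have hra : C'.rem a = p a := by
      rcases Finset.mem_insert.mp ha with rfl | haF
      · exact hremq
      · rw [hrema a (fun h => hqF (h ▸ haF))]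
        exact hfull a haF
    rw [hpra, hra]
    split_ifs with h1 h2
    · exact le_rfl
    · exact absurd (by
        have h3 := (Nat.cast_le (α := ℝ)).mpr h1
        push_cast at h3
        linarith) h2
    · exact (hp a).le
    · exact le_rfl
  have hcore := core_gain μ p pt q C.QF C.prF (rotatedPr μ pt C q) ⌊x⌋₊ ⌈μ ^ 2⌉₊
    C.bijF hqF hμ (Nat.le_ceil _) hp hpt hdist
    (by simp [rotatedPr])
    (by
      intro a ha haS
      have hne : a ≠ q := fun h => hqF (h ▸ ha)
      simp [rotatedPr, hne, Finset.mem_filter, ha, haS])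
    (by
      intro a ha haS
      have hne : a ≠ q := fun h => hqF (h ▸ ha)
      simp [rotatedPr, hne, Finset.mem_filter, haS])
  rw [hL] at *
  linarith [hcore.trans hR]
end
end

section
/- Run Algorithm 2 on an unweighted SPPT instance with distortion at most μ. For any real x ≥ 0 and time t, if cov(x,t) is strictly decreasing at t due to the algorithm's processing of a job (i.e., the job currently being processed has positive volume covered by x), then cov(x,t) = V(t), the total remaining processing time of all jobs pending in the algorithm at t. -/
open MeasureTheory
open scoped Classical

noncomputable section

variable {n : ℕ}

/-- In a run of Algorithm 2 on an unweighted SPPT instance with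
distortion at most `μ` (so that `|Q_F| ≤ |Q_P|`), if `cov(x, t)` is strictly
decreasing at `t` due to the processing of a job — i.e. the currently processed job
(the top-priority job of the partial bin) has positive volume covered by the bar `x` —
then `cov(x, t) = V(t)`. -/
theorem processing_covers_everything
    (n : ℕ) (μ : ℝ) (p pt : Fin n → ℝ)
    (hp : ∀ q, 0 < p q) (hpt : ∀ q, 0 < pt q)
    (hdist : ∀ q, pt q ≤ p q ∧ p q < μ * pt q)
    (C : Config n)
    (hbal : C.QF.card ≤ C.QP.card)
    (x : ℝ) (hx : 0 ≤ x)
    (q : Fin n) (hq : q ∈ C.QP) (htop : C.prP q = C.QP.card)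
    (hcovered : (wbase C q : ℝ) ≤ x) (hpos : 0 < C.rem q) :
    cov C x = vol C := by
  classical
  have hqF : q ∉ C.QF := fun h => absurd hq (Finset.disjoint_left.mp C.disj h)
  have hwq : wbase C q = C.QP.card := by
    simp only [wbase, if_neg hqF]
    have h1 : C.QP.filter (fun a => C.prP a ≤ C.prP q) = C.QP := by
      apply Finset.filter_true_of_mem
      intro a ha
      have := C.bijP.mapsTo (Finset.mem_coe.mpr ha)
      rw [htop]
      exact this.2
    rw [h1]
  have hall : ∀ a ∈ C.QF ∪ C.QP, (wbase C a : ℝ) ≤ x := by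
    intro a ha
    have hw : wbase C a ≤ C.QP.card := by
      by_cases hF : a ∈ C.QF
      · simp only [wbase, if_pos hF]
        exact le_trans (Finset.card_filter_le _ _) hbal
      · simp only [wbase, if_neg hF]
        exact Finset.card_filter_le _ _
    calc (wbase C a : ℝ) ≤ (C.QP.card : ℝ) := by exact_mod_cast hw
      _ = (wbase C q : ℝ) := by rw [hwq]
      _ ≤ x := hcovered
  unfold cov vol
  apply Finset.sum_congr rfl
  intro a ha
  rw [if_pos (hall a ha)]
end
end

section
/- Run Algorithm 3 on an SPPT instance with distortion at most μ and let θ = ⌈μ²⌉. If a job q is released at time t, then for every real x ≥ 0: (1) cov(x, t) ≥ cov(x, t⁻), and (2) cov(x + θ·w(q), t) ≥ cov(x, t⁻) + p(q). -/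
open MeasureTheory
open scoped Classical

noncomputable section

/-- A configuration of Algorithm 3: for each weight class `i` (jobs `q` with
`cls q = i`) there is a superbin consisting of a full bin (the class-`i` part of `QF`)
and a partial bin (the class-`i` part of `QP`), each carrying a bijective priority
map onto `{1, …, size of that bin}`. -/
structure WConfig (n : ℕ) (cls : Fin n → ℤ) where
  QF : Finset (Fin n)
  QP : Finset (Fin n)
  rem : Fin n → ℝ
  prF : Fin n → ℕ
  prP : Fin n → ℕ
  disj : Disjoint QF QP
  bijF : ∀ i : ℤ, Set.BijOn prF ((QF.filter fun a => cls a = i) : Set (Fin n))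
      (Set.Icc 1 (QF.filter fun a => cls a = i).card)
  bijP : ∀ i : ℤ, Set.BijOn prP ((QP.filter fun a => cls a = i) : Set (Fin n))
      (Set.Icc 1 (QP.filter fun a => cls a = i).card)

variable {n : ℕ} {cls : Fin n → ℤ}

/-- `wbase q`: the total weight of the jobs in `q`'s own bin (same side, same weight
class) whose priority is at most that of `q`. -/
def wbaseW (w : Fin n → ℝ) (C : WConfig n cls) (q : Fin n) : ℝ :=
  if q ∈ C.QF then
    ∑ a ∈ C.QF.filter (fun a => cls a = cls q ∧ C.prF a ≤ C.prF q), w a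
  else
    ∑ a ∈ C.QP.filter (fun a => cls a = cls q ∧ C.prP a ≤ C.prP q), w a

/-- The volume covered by a bar at height `x`: the sum over all pending jobs `q`
(of all superbins) of the remaining time of `q` if `x ≥ wbase q`, else `0`. -/
def covW (w : Fin n → ℝ) (C : WConfig n cls) (x : ℝ) : ℝ :=
  ∑ q ∈ C.QF ∪ C.QP, if wbaseW w C q ≤ x then C.rem q else 0

/-- `V`: the total remaining volume of pending jobs. -/
def volW (C : WConfig n cls) : ℝ :=
  ∑ q ∈ C.QF ∪ C.QP, C.rem q

/-- Total weight of the full bin of superbin `i`. -/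
def binWeightF (w : Fin n → ℝ) (C : WConfig n cls) (i : ℤ) : ℝ :=
  ∑ a ∈ C.QF.filter (fun a => cls a = i), w a

/-- Total weight of the partial bin of superbin `i`. -/
def binWeightP (w : Fin n → ℝ) (C : WConfig n cls) (i : ℤ) : ℝ :=
  ∑ a ∈ C.QP.filter (fun a => cls a = i), w a

/-- The priorities of the full bins after releasing job `q` into the full bin of its
superbin: `q` is inserted at the top and the cyclic rotation fixing all violations
involving `q` (inside `q`'s own class) is applied. -/
def rotatedPrW (μ : ℝ) (pt : Fin n → ℝ) (C : WConfig n cls) (q : Fin n) : Fin n → ℕ :=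
  fun a =>
    if a = q then
      WithBot.unbotD ((C.QF.filter fun b => cls b = cls q).card + 1)
        ((C.QF.filter fun b => cls b = cls q ∧ μ * pt b ≤ pt q).image C.prF).min
    else if a ∈ C.QF.filter (fun b => cls b = cls q ∧ μ * pt b ≤ pt q) then
      WithBot.unbotD ((C.QF.filter fun b => cls b = cls q).card + 1)
        ((((C.QF.filter fun b => cls b = cls q ∧ μ * pt b ≤ pt q).filter
            fun b => C.prF a < C.prF b).image C.prF).min)
    else C.prF a

/-- Release of job `q` in Algorithm 3: `q` (full) enters the full bin of its superbin
with top priority and the rotation fixing all violations involving `q` is applied. -/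
def WReleaseStep (μ : ℝ) (p pt : Fin n → ℝ) (C C' : WConfig n cls) (q : Fin n) : Prop :=
  q ∉ C.QF ∧ q ∉ C.QP ∧
  C'.QF = insert q C.QF ∧ C'.QP = C.QP ∧
  C'.rem q = p q ∧ (∀ a, a ≠ q → C'.rem a = C.rem a) ∧
  (∀ a ∈ C'.QF, C'.prF a = rotatedPrW μ pt C q a) ∧
  (∀ a ∈ C.QP, C'.prP a = C.prP a)

/-- `UponHeavyF i` of Algorithm 3: called as soon as the full bin of superbin `i`
outweighs its partial bin; the top-priority job of `F^i` moves to the top priority of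
`P^i` (LIFO). -/
def WMoveStep (C C' : WConfig n cls) (i : ℤ) (q : Fin n) : Prop :=
  (C.QF.filter fun a => cls a = i).card = (C.QP.filter fun a => cls a = i).card + 1 ∧
  q ∈ C.QF ∧ cls q = i ∧ C.prF q = (C.QF.filter fun a => cls a = i).card ∧
  C'.QF = C.QF.erase q ∧ C'.QP = insert q C.QP ∧ C'.rem = C.rem ∧
  (∀ a ∈ C'.QF, C'.prF a = C.prF a) ∧ (∀ a ∈ C.QP, C'.prP a = C.prP a) ∧
  C'.prP q = (C.QP.filter fun a => cls a = i).card + 1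

/-- Processing for a duration `d` in Algorithm 3: the processed job `q` is the
top-priority job of the partial bin of maximum total weight. -/
def WProcessStep (w : Fin n → ℝ) (C C' : WConfig n cls) (q : Fin n) (d : ℝ) : Prop :=
  (∀ i, binWeightF w C i ≤ binWeightP w C i) ∧
  q ∈ C.QP ∧ C.prP q = (C.QP.filter fun a => cls a = cls q).card ∧
  (∀ i, binWeightP w C i ≤ binWeightP w C (cls q)) ∧
  0 ≤ d ∧ d ≤ C.rem q ∧
  C'.QF = C.QF ∧ C'.QP = C.QP ∧ C'.prF = C.prF ∧ C'.prP = C.prP ∧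
  C'.rem q = C.rem q - d ∧ (∀ a, a ≠ q → C'.rem a = C.rem a)

/-- A fully processed job is completed and leaves the system. -/
def WCompleteStep (C C' : WConfig n cls) (q : Fin n) : Prop :=
  q ∈ C.QP ∧ C.prP q = (C.QP.filter fun a => cls a = cls q).card ∧ C.rem q = 0 ∧
  C'.QF = C.QF ∧ C'.QP = C.QP.erase q ∧ C'.prF = C.prF ∧
  (∀ a ∈ C'.QP, C'.prP a = C.prP a) ∧ C'.rem = C.rem

section Aux

private lemma unbot'_min_le_s13 {s : Finset ℕ} (d : ℕ) {x : ℕ} (hx : x ∈ s) :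
    WithBot.unbotD d s.min ≤ x := by
  have hne : s.Nonempty := ⟨x, hx⟩
  rw [← Finset.coe_min' hne]
  exact s.min'_le x hx

private lemma unbot'_min_mem {s : Finset ℕ} (d : ℕ) (h : s.Nonempty) :
    WithBot.unbotD d s.min ∈ s := by
  rw [← Finset.coe_min' h]; exact s.min'_mem h

private lemma unbot'_min_empty (d : ℕ) : WithBot.unbotD d (∅ : Finset ℕ).min = d := by
  rw [Finset.min_empty]; rfl

private lemma filter_card_of_bijOn {α : Type*} [DecidableEq α] (T : Finset α) (f : α → ℕ)
    (hbij : Set.BijOn f (T : Set α) (Set.Icc 1 T.card)) {a : α} (ha : a ∈ T) :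
    (T.filter fun b => f b ≤ f a).card = f a := by
  have hfa : f a ∈ Set.Icc 1 T.card := hbij.mapsTo ha
  have himg : (T.filter fun b => f b ≤ f a).image f = Finset.Icc 1 (f a) := by
    ext y
    simp only [Finset.mem_image, Finset.mem_filter, Finset.mem_Icc]
    constructor
    · rintro ⟨b, ⟨hbT, hble⟩, rfl⟩
      exact ⟨(hbij.mapsTo hbT).1, hble⟩
    · rintro ⟨h1, h2⟩
      obtain ⟨b, hbT, rfl⟩ := hbij.surjOn ⟨h1, le_trans h2 hfa.2⟩
      exact ⟨b, ⟨hbT, h2⟩, rfl⟩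
  have hinj : Set.InjOn f ((T.filter fun b => f b ≤ f a) : Set α) :=
    hbij.injOn.mono (by exact_mod_cast Finset.filter_subset _ _)
  have := Finset.card_image_of_injOn hinj
  rw [himg] at this
  simpa using this.symm

private lemma sum_mono_extra {α : Type*} [DecidableEq α] (T D : Finset α) (hDT : D ⊆ T)
    (f g h : α → ℝ) (hfg : ∀ a ∈ T, g a ≤ f a) (hD : ∀ a ∈ D, g a + h a ≤ f a) :
    (∑ a ∈ T, g a) + ∑ a ∈ D, h a ≤ ∑ a ∈ T, f a := by
  have h1 : ∑ a ∈ T \ D, g a ≤ ∑ a ∈ T \ D, f a :=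
    Finset.sum_le_sum fun a ha => hfg a (Finset.sdiff_subset ha)
  have h2 : (∑ a ∈ D, g a) + ∑ a ∈ D, h a ≤ ∑ a ∈ D, f a := by
    rw [← Finset.sum_add_distrib]; exact Finset.sum_le_sum hD
  have e1 : (∑ a ∈ T \ D, g a) + ∑ a ∈ D, g a = ∑ a ∈ T, g a := Finset.sum_sdiff hDT
  have e2 : (∑ a ∈ T \ D, f a) + ∑ a ∈ D, f a = ∑ a ∈ T, f a := Finset.sum_sdiff hDT
  linarith

private lemma core_sdiff {α : Type*} [DecidableEq α] (S : Finset α) (s nx : α → ℕ)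
    (pp : α → ℝ)
    (hinj : Set.InjOn s (S : Set α))
    (hsn : ∀ a ∈ S, s a < nx a)
    (hnxle : ∀ a ∈ S, ∀ b ∈ S, s a < s b → nx a ≤ s b)
    (W : ℝ) (hW : 0 < W) (x : ℝ) :
    (∑ a ∈ S.filter (fun a => (s a : ℝ) * W ≤ x), pp a ≤
      ∑ a ∈ S.filter (fun a => (nx a : ℝ) * W ≤ x), pp a) ∨
    (∃ a₀ ∈ S, ((s a₀ : ℝ) * W ≤ x) ∧ ¬ ((nx a₀ : ℝ) * W ≤ x) ∧
      (∑ a ∈ S.filter (fun a => (s a : ℝ) * W ≤ x), pp a ≤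
        (∑ a ∈ S.filter (fun a => (nx a : ℝ) * W ≤ x), pp a) + pp a₀) ∧
      (∀ b ∈ S, (s b : ℝ) * W ≤ x → ¬ ((nx b : ℝ) * W ≤ x) → b = a₀)) := by
  set X := S.filter (fun a => (s a : ℝ) * W ≤ x) with hX
  set Y := S.filter (fun a => (nx a : ℝ) * W ≤ x) with hY
  have hYX : Y ⊆ X := by
    intro b hb
    rw [hY, Finset.mem_filter] at hb
    rw [hX, Finset.mem_filter]
    refine ⟨hb.1, le_trans ?_ hb.2⟩
    have := hsn b hb.1
    exact mul_le_mul_of_nonneg_right (by exact_mod_cast this.le) hW.le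
  have hsd : (∑ a ∈ X \ Y, pp a) + ∑ a ∈ Y, pp a = ∑ a ∈ X, pp a := Finset.sum_sdiff hYX
  rcases (X \ Y).eq_empty_or_nonempty with hE | ⟨a₀, ha₀⟩
  · left
    rw [hE, Finset.sum_empty, zero_add] at hsd
    exact le_of_eq hsd.symm
  · right
    rw [Finset.mem_sdiff, hX, hY, Finset.mem_filter] at ha₀
    obtain ⟨⟨ha₀S, ha₀x⟩, ha₀Y⟩ := ha₀
    have ha₀nx : ¬ ((nx a₀ : ℝ) * W ≤ x) := fun h => ha₀Y (Finset.mem_filter.mpr ⟨ha₀S, h⟩)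
    have huniq : ∀ b ∈ S, (s b : ℝ) * W ≤ x → ¬ ((nx b : ℝ) * W ≤ x) → b = a₀ := by
      intro b hbS hbx hbnx
      rcases Nat.lt_trichotomy (s b) (s a₀) with h | h | h
      · exfalso
        have := hnxle b hbS a₀ ha₀S h
        exact hbnx (le_trans (mul_le_mul_of_nonneg_right (by exact_mod_cast this) hW.le) ha₀x)
      · exact hinj hbS ha₀S h
      · exfalso
        have := hnxle a₀ ha₀S b hbS h
        exact ha₀nx (le_trans (mul_le_mul_of_nonneg_right (by exact_mod_cast this) hW.le) hbx)
    have hsing : X \ Y = {a₀} := by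
      apply Finset.eq_singleton_iff_unique_mem.mpr
      constructor
      · rw [Finset.mem_sdiff]
        exact ⟨Finset.mem_filter.mpr ⟨ha₀S, ha₀x⟩, ha₀Y⟩
      · intro b hb
        rw [Finset.mem_sdiff, hX, Finset.mem_filter] at hb
        obtain ⟨⟨hbS, hbx⟩, hbY⟩ := hb
        exact huniq b hbS hbx (fun h => hbY (Finset.mem_filter.mpr ⟨hbS, h⟩))
    refine ⟨a₀, ha₀S, ha₀x, ha₀nx, ?_, huniq⟩
    rw [hsing, Finset.sum_singleton] at hsd
    linarith

private lemma wbase_formula {n : ℕ} {cls : Fin n → ℤ} (w : Fin n → ℝ)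
    (hw : ∀ q, w q = 2 ^ cls q) (C : WConfig n cls) {a : Fin n} (ha : a ∈ C.QF) :
    wbaseW w C a = (C.prF a : ℝ) * 2 ^ cls a := by
  rw [wbaseW, if_pos ha]
  have hff : C.QF.filter (fun b => cls b = cls a ∧ C.prF b ≤ C.prF a)
      = (C.QF.filter fun b => cls b = cls a).filter (fun b => C.prF b ≤ C.prF a) := by
    rw [Finset.filter_filter]
  rw [hff]
  have hsum : ∀ b ∈ (C.QF.filter fun b => cls b = cls a).filter (fun b => C.prF b ≤ C.prF a),
      w b = 2 ^ cls a := by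
    intro b hb
    have hb1 := (Finset.mem_filter.mp (Finset.mem_filter.mp hb).1).2
    rw [hw b, hb1]
  rw [Finset.sum_congr rfl hsum, Finset.sum_const, nsmul_eq_mul]
  congr 1
  have hmem : a ∈ C.QF.filter (fun b => cls b = cls a) := Finset.mem_filter.mpr ⟨ha, rfl⟩
  exact_mod_cast filter_card_of_bijOn _ _ (C.bijF (cls a)) hmem

end Aux
set_option maxHeartbeats 1000000
/-- In a run of Algorithm 3 on an SPPT instance with distortion at
most `μ` (weights being powers of two, the full bins containing only full jobs and no
violations), if a job `q` is released at time `t` then, with `θ = ⌈μ²⌉`, for every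
`x ≥ 0`: (1) `cov(x, t) ≥ cov(x, t⁻)`, and
(2) `cov(x + θ·w(q), t) ≥ cov(x, t⁻) + p(q)`. -/
theorem wrelease_cov_bounds
    (n : ℕ) (μ : ℝ) (p pt w : Fin n → ℝ) (cls : Fin n → ℤ)
    (hp : ∀ q, 0 < p q) (hpt : ∀ q, 0 < pt q)
    (hw : ∀ q, w q = 2 ^ cls q)
    (hdist : ∀ q, pt q ≤ p q ∧ p q < μ * pt q)
    (C C' : WConfig n cls) (q : Fin n)
    (hfull : ∀ a ∈ C.QF, C.rem a = p a)
    (hrem : ∀ a, 0 ≤ C.rem a)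
    (hnv : ∀ q₁ q₂, q₁ ∈ C.QF → q₂ ∈ C.QF → cls q₁ = cls q₂ →
      C.prF q₂ < C.prF q₁ → ¬ (μ * pt q₂ ≤ pt q₁))
    (hstep : WReleaseStep μ p pt C C' q) :
    ∀ x : ℝ, 0 ≤ x →
      covW w C x ≤ covW w C' x ∧
      covW w C x + p q ≤ covW w C' (x + ((⌈μ ^ 2⌉ : ℤ) : ℝ) * w q) := by
  obtain ⟨hqF, hqP, hQF', hQP', hremq, hrema, hprF', hprP'⟩ := hstep
  set W : ℝ := (2:ℝ) ^ cls q with hWdef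
  have hW : 0 < W := by rw [hWdef]; exact zpow_pos (by norm_num) _
  set Ti := C.QF.filter (fun b => cls b = cls q) with hTi
  set k := Ti.card with hk
  set S := C.QF.filter (fun b => cls b = cls q ∧ μ * pt b ≤ pt q) with hSdef
  set m := WithBot.unbotD (k + 1) ((S.image C.prF).min) with hmdef
  set nx : Fin n → ℕ := fun a =>
    WithBot.unbotD (k + 1) (((S.filter fun b => C.prF a < C.prF b).image C.prF).min) with hnxdef
  have hSQF : ∀ a ∈ S, a ∈ C.QF := fun a ha => (Finset.mem_filter.mp ha).1
  have hScls : ∀ a ∈ S, cls a = cls q := fun a ha => (Finset.mem_filter.mp ha).2.1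
  have hSpt : ∀ a ∈ S, μ * pt a ≤ pt q := fun a ha => (Finset.mem_filter.mp ha).2.2
  have hSTi : ∀ a ∈ S, a ∈ Ti := fun a ha => Finset.mem_filter.mpr ⟨hSQF a ha, hScls a ha⟩
  have hbij : Set.BijOn C.prF (Ti : Set (Fin n)) (Set.Icc 1 k) := C.bijF (cls q)
  have hprFk : ∀ a ∈ Ti, C.prF a ≤ k := fun a ha =>
    (hbij.mapsTo (Finset.mem_coe.mpr ha)).2
  have hinjS : Set.InjOn C.prF (S : Set (Fin n)) :=
    hbij.injOn.mono (Finset.coe_subset.mpr (fun a ha => hSTi a ha))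
  -- facts about m
  have hm_le : ∀ a ∈ S, m ≤ C.prF a := fun a ha =>
    unbot'_min_le_s13 _ (Finset.mem_image_of_mem _ ha)
  have hm_le_k1 : m ≤ k + 1 := by
    rcases S.eq_empty_or_nonempty with h | h
    · rw [hmdef, h, Finset.image_empty, unbot'_min_empty]
    · obtain ⟨a, haS, hae⟩ := Finset.mem_image.mp (unbot'_min_mem (k + 1) (h.image C.prF))
      rw [hmdef, ← hae]
      exact le_trans (hprFk a (hSTi a haS)) (Nat.le_succ k)
  -- facts about nx
  have hnx_gt : ∀ a ∈ S, C.prF a < nx a := by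
    intro a ha
    rcases (S.filter fun b => C.prF a < C.prF b).eq_empty_or_nonempty with h | h
    · have hv : nx a = k + 1 := by
        simp only [hnxdef]; rw [h, Finset.image_empty, unbot'_min_empty]
      rw [hv]
      exact Nat.lt_succ_of_le (hprFk a (hSTi a ha))
    · obtain ⟨c, hc, hce⟩ := Finset.mem_image.mp (unbot'_min_mem (k + 1) (h.image C.prF))
      have hv : nx a = C.prF c := by simp only [hnxdef]; rw [← hce]
      rw [hv]
      exact (Finset.mem_filter.mp hc).2
  have hnx_le : ∀ a ∈ S, ∀ b ∈ S, C.prF a < C.prF b → nx a ≤ C.prF b := by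
    intro a _ b hb hab
    have hmem : C.prF b ∈ (S.filter fun c => C.prF a < C.prF c).image C.prF :=
      Finset.mem_image_of_mem _ (Finset.mem_filter.mpr ⟨hb, hab⟩)
    simp only [hnxdef]
    exact unbot'_min_le_s13 _ hmem
  have hnx_le_k1 : ∀ a ∈ S, nx a ≤ k + 1 := by
    intro a _
    rcases (S.filter fun b => C.prF a < C.prF b).eq_empty_or_nonempty with h | h
    · simp only [hnxdef]; rw [h, Finset.image_empty, unbot'_min_empty]
    · obtain ⟨c, hc, hce⟩ := Finset.mem_image.mp (unbot'_min_mem (k + 1) (h.image C.prF))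
      simp only [hnxdef]; rw [← hce]
      exact le_trans (hprFk c (hSTi c (Finset.mem_filter.mp hc).1)) (Nat.le_succ k)
  -- priorities in C'
  have hq'F : q ∈ C'.QF := by rw [hQF']; exact Finset.mem_insert_self _ _
  have hprq' : C'.prF q = m := by
    rw [hprF' q hq'F]
    unfold rotatedPrW
    rw [if_pos rfl, hmdef, hk, hTi, hSdef]
  have hprS' : ∀ a ∈ S, C'.prF a = nx a := by
    intro a ha
    have haQF := hSQF a ha
    have haQF' : a ∈ C'.QF := by rw [hQF']; exact Finset.mem_insert_of_mem haQF
    have hne : a ≠ q := fun h => hqF (h ▸ haQF)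
    rw [hprF' a haQF']
    unfold rotatedPrW
    rw [if_neg hne, if_pos (show a ∈ C.QF.filter (fun b => cls b = cls q ∧ μ * pt b ≤ pt q) by
      rw [← hSdef]; exact ha)]
  have hprO' : ∀ a ∈ C.QF, a ∉ S → C'.prF a = C.prF a := by
    intro a haQF haS
    have haQF' : a ∈ C'.QF := by rw [hQF']; exact Finset.mem_insert_of_mem haQF
    have hne : a ≠ q := fun h => hqF (h ▸ haQF)
    rw [hprF' a haQF']
    unfold rotatedPrW
    rw [if_neg hne, if_neg (fun h => haS (by rw [hSdef]; exact h))]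
  -- wbase values
  have hwbC : ∀ a ∈ C.QF, wbaseW w C a = (C.prF a : ℝ) * 2 ^ cls a :=
    fun a ha => wbase_formula w hw C ha
  have hwbC' : ∀ a ∈ C'.QF, wbaseW w C' a = (C'.prF a : ℝ) * 2 ^ cls a :=
    fun a ha => wbase_formula w hw C' ha
  have hQPwb : ∀ a ∈ C.QP, wbaseW w C' a = wbaseW w C a := by
    intro a ha
    have haF : a ∉ C.QF := Finset.disjoint_right.mp C.disj ha
    have haP' : a ∈ C'.QP := by rw [hQP']; exact ha
    have haF' : a ∉ C'.QF := Finset.disjoint_right.mp C'.disj haP'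
    rw [wbaseW, wbaseW, if_neg haF, if_neg haF', hQP']
    refine Finset.sum_congr (Finset.filter_congr ?_) (fun _ _ => rfl)
    intro b hb
    simp [hprP' b hb, hprP' a ha]
  set F := C.QF ∪ C.QP with hF
  have hqFF : q ∉ F := by
    rw [hF, Finset.mem_union]; rintro (h | h); exacts [hqF h, hqP h]
  have hSsubF : S ⊆ F := fun a ha => Finset.mem_union_left _ (hSQF a ha)
  have hterm : ∀ y : ℝ, ∀ a ∈ F \ S,
      (if wbaseW w C' a ≤ y then C'.rem a else 0) = (if wbaseW w C a ≤ y then C.rem a else 0) := by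
    intro y a ha
    rw [Finset.mem_sdiff] at ha
    obtain ⟨haF, haS⟩ := ha
    have hne : a ≠ q := fun h => hqFF (h ▸ haF)
    rw [hrema a hne]
    rcases Finset.mem_union.mp haF with hQ | hQ
    · have haQF' : a ∈ C'.QF := by rw [hQF']; exact Finset.mem_insert_of_mem hQ
      rw [hwbC a hQ, hwbC' a haQF', hprO' a hQ haS]
    · rw [hQPwb a hQ]
  have hcovC : ∀ y : ℝ, covW w C y =
      (∑ a ∈ F \ S, if wbaseW w C a ≤ y then C.rem a else 0) +
      ∑ a ∈ S, (if (C.prF a : ℝ) * W ≤ y then p a else 0) := by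
    intro y
    rw [covW, ← hF, ← Finset.sum_sdiff hSsubF]
    congr 1
    refine Finset.sum_congr rfl ?_
    intro a ha
    rw [hwbC a (hSQF a ha), hScls a ha, ← hWdef, hfull a (hSQF a ha)]
  have hcovC' : ∀ y : ℝ, covW w C' y =
      (if (m : ℝ) * W ≤ y then p q else 0) +
      ((∑ a ∈ F \ S, if wbaseW w C a ≤ y then C.rem a else 0) +
      ∑ a ∈ S, (if (nx a : ℝ) * W ≤ y then p a else 0)) := by
    intro y
    rw [covW, hQF', hQP']
    have hins : insert q C.QF ∪ C.QP = insert q F := by rw [hF, Finset.insert_union]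
    rw [hins, Finset.sum_insert hqFF]
    congr 1
    · rw [hwbC' q hq'F, hprq', hremq, ← hWdef]
    · rw [← Finset.sum_sdiff hSsubF]
      congr 1
      · exact Finset.sum_congr rfl (fun a ha => hterm y a ha)
      · refine Finset.sum_congr rfl ?_
        intro a ha
        have haQF' : a ∈ C'.QF := by rw [hQF']; exact Finset.mem_insert_of_mem (hSQF a ha)
        have hne : a ≠ q := fun h => hqF (h ▸ hSQF a ha)
        rw [hwbC' a haQF', hprS' a ha, hScls a ha, ← hWdef, hrema a hne,
          hfull a (hSQF a ha)]
  -- numeric facts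
  have hptq := hpt q
  have hdq := hdist q
  have hμ1 : 1 < μ := (lt_mul_iff_one_lt_left hptq).mp (lt_of_le_of_lt hdq.1 hdq.2)
  have hμ0 : 0 < μ := lt_trans one_pos hμ1
  set θ : ℝ := ((⌈μ ^ 2⌉ : ℤ) : ℝ) with hθdef
  have hθμ : μ ^ 2 ≤ θ := Int.le_ceil _
  have hθ0 : (0:ℝ) ≤ θ := le_trans (by positivity) hθμ
  set θn : ℕ := (⌈μ ^ 2⌉ : ℤ).toNat with hθndef
  have hθn : (θn : ℝ) = θ := by
    rw [hθndef, hθdef]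
    exact_mod_cast congrArg (fun z : ℤ => (z : ℝ))
      (Int.toNat_of_nonneg (Int.ceil_nonneg (by positivity : (0:ℝ) ≤ μ ^ 2)))
  intro x hx
  constructor
  · -- Part (1)
    rw [hcovC x, hcovC' x]
    have hifq : (0:ℝ) ≤ (if (m : ℝ) * W ≤ x then p q else 0) := by
      split_ifs; exacts [(hp q).le, le_refl 0]
    have eX : ∑ a ∈ S.filter (fun a => (C.prF a : ℝ) * W ≤ x), p a
        = ∑ a ∈ S, (if (C.prF a : ℝ) * W ≤ x then p a else 0) := Finset.sum_filter _ _
    have eY : ∑ a ∈ S.filter (fun a => (nx a : ℝ) * W ≤ x), p a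
        = ∑ a ∈ S, (if (nx a : ℝ) * W ≤ x then p a else 0) := Finset.sum_filter _ _
    rcases core_sdiff S C.prF nx p hinjS hnx_gt hnx_le W hW x with
      hL | ⟨a₀, ha₀S, ha₀x, _, hsum, _⟩
    · rw [eX, eY] at hL; linarith only [hL, hifq]
    · have hmx : (m : ℝ) * W ≤ x :=
        le_trans (mul_le_mul_of_nonneg_right
          (by exact_mod_cast hm_le a₀ ha₀S) hW.le) ha₀x
      rw [if_pos hmx]
      have hpa₀ : p a₀ ≤ p q := by
        have h1 := (hdist a₀).2
        have h2 := hSpt a₀ ha₀S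
        linarith [hdq.1]
      rw [eX, eY] at hsum
      linarith only [hsum, hpa₀]
  · -- Part (2)
    rw [hcovC x, hcovC' (x + θ * w q), hw q, ← hWdef]
    set x' := x + θ * W with hx'def
    have hxx' : x ≤ x' := by
      rw [hx'def]; nlinarith [hW.le, hθ0]
    have hcmono : ∀ a ∈ F \ S, (if wbaseW w C a ≤ x then C.rem a else 0) ≤
        (if wbaseW w C a ≤ x' then C.rem a else 0) := by
      intro a _
      by_cases h1 : wbaseW w C a ≤ x
      · rw [if_pos h1, if_pos (le_trans h1 hxx')]
      · rw [if_neg h1]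
        split_ifs
        exacts [hrem a, le_refl 0]
    have hcsum : ∑ a ∈ F \ S, (if wbaseW w C a ≤ x then C.rem a else 0) ≤
        ∑ a ∈ F \ S, (if wbaseW w C a ≤ x' then C.rem a else 0) :=
      Finset.sum_le_sum hcmono
    set A := Nat.floor (x / W) with hAdef
    have hA1 : (A : ℝ) ≤ x / W := Nat.floor_le (div_nonneg hx hW.le)
    have hA2 : x / W < (A : ℝ) + 1 := Nat.lt_floor_add_one _
    have hcast : ∀ jn : ℕ, (jn : ℝ) ≤ (A : ℝ) + (θn : ℝ) → (jn : ℝ) * W ≤ x' := by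
      intro jn hle
      calc (jn : ℝ) * W ≤ ((A : ℝ) + (θn : ℝ)) * W := mul_le_mul_of_nonneg_right hle hW.le
        _ ≤ (x / W + θ) * W := mul_le_mul_of_nonneg_right (by linarith) hW.le
        _ = x + θ * W := by rw [add_mul, div_mul_cancel₀ _ hW.ne']
        _ = x' := hx'def.symm
    have hpkg : A + θn ≤ k → (∀ a ∈ S, ¬ (A + 1 ≤ C.prF a ∧ C.prF a ≤ A + θn)) →
        ∃ D' : Finset (Fin n), D' ⊆ F \ S ∧ (μ * pt q ≤ ∑ a ∈ D', p a) ∧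
          (∀ a ∈ D', (if wbaseW w C a ≤ x then C.rem a else 0) + p a ≤
            (if wbaseW w C a ≤ x' then C.rem a else 0)) := by
      intro hkE hnoS
      refine ⟨Ti.filter (fun a => A + 1 ≤ C.prF a ∧ C.prF a ≤ A + θn), ?_, ?_, ?_⟩
      · intro a ha
        rw [Finset.mem_filter] at ha
        obtain ⟨haTi, hcond⟩ := ha
        rw [Finset.mem_sdiff]
        refine ⟨Finset.mem_union_left _ (Finset.mem_filter.mp haTi).1, fun hS' => hnoS a hS' hcond⟩
      · have himg : (Ti.filter (fun a => A + 1 ≤ C.prF a ∧ C.prF a ≤ A + θn)).image C.prF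
            = Finset.Icc (A + 1) (A + θn) := by
          ext j
          simp only [Finset.mem_image, Finset.mem_filter, Finset.mem_Icc]
          constructor
          · rintro ⟨b, ⟨_, hb1, hb2⟩, rfl⟩
            exact ⟨hb1, hb2⟩
          · rintro ⟨h1, h2⟩
            have hj : j ∈ Set.Icc 1 k := ⟨le_trans (Nat.le_add_left 1 A) h1, le_trans h2 hkE⟩
            obtain ⟨b, hbTi, rfl⟩ := hbij.surjOn hj
            exact ⟨b, ⟨Finset.mem_coe.mp hbTi, h1, h2⟩, rfl⟩
        have hDcard : (Ti.filter (fun a => A + 1 ≤ C.prF a ∧ C.prF a ≤ A + θn)).card = θn := by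
          have hinj2 : Set.InjOn C.prF
              ((Ti.filter (fun a => A + 1 ≤ C.prF a ∧ C.prF a ≤ A + θn)) : Set (Fin n)) :=
            hbij.injOn.mono (Finset.coe_subset.mpr (Finset.filter_subset _ _))
          have := Finset.card_image_of_injOn hinj2
          rw [himg] at this
          rw [← this, Nat.card_Icc]
          omega
        have hlow : ∀ a ∈ Ti.filter (fun a => A + 1 ≤ C.prF a ∧ C.prF a ≤ A + θn),
            pt q / μ ≤ p a := by
          intro a ha
          rw [Finset.mem_filter] at ha
          obtain ⟨haTi, hcond⟩ := ha
          have haS : a ∉ S := fun hS' => hnoS a hS' hcond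
          have hanv : ¬ (μ * pt a ≤ pt q) := by
            intro hcon
            exact haS (by
              rw [hSdef]
              exact Finset.mem_filter.mpr ⟨(Finset.mem_filter.mp haTi).1,
                (Finset.mem_filter.mp haTi).2, hcon⟩)
          push_neg at hanv
          rw [div_le_iff₀ hμ0]
          nlinarith [(hdist a).1, hpt a]
        have hsumlow := Finset.card_nsmul_le_sum
          (Ti.filter (fun a => A + 1 ≤ C.prF a ∧ C.prF a ≤ A + θn)) p (pt q / μ) hlow
        rw [hDcard, nsmul_eq_mul] at hsumlow
        have hmain : μ * pt q ≤ (θn : ℝ) * (pt q / μ) := by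
          rw [hθn]
          have h1 : μ * pt q = μ ^ 2 * (pt q / μ) := by field_simp
          rw [h1]
          exact mul_le_mul_of_nonneg_right hθμ (by positivity)
        linarith
      · intro a ha
        rw [Finset.mem_filter] at ha
        obtain ⟨haTi, hc1, hc2⟩ := ha
        have haQF : a ∈ C.QF := (Finset.mem_filter.mp haTi).1
        have hacls : cls a = cls q := (Finset.mem_filter.mp haTi).2
        have hwba : wbaseW w C a = (C.prF a : ℝ) * W := by
          rw [hwbC a haQF, hacls, ← hWdef]
        have hnotx : ¬ (wbaseW w C a ≤ x) := by
          rw [hwba]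
          intro hcon
          have : (C.prF a : ℝ) ≤ x / W := (le_div_iff₀ hW).mpr hcon
          have h3 : (C.prF a : ℝ) < (A : ℝ) + 1 := lt_of_le_of_lt this hA2
          have h4 : C.prF a < A + 1 := by exact_mod_cast h3
          omega
        have hyesx' : wbaseW w C a ≤ x' := by
          rw [hwba]
          exact hcast _ (by exact_mod_cast hc2)
        rw [if_neg hnotx, if_pos hyesx', hfull a haQF, zero_add]
    by_cases hm' : (m : ℝ) * W ≤ x'
    · -- q's bar is covered at x'
      rw [if_pos hm']
      have eX : ∑ a ∈ S.filter (fun a => (C.prF a : ℝ) * W ≤ x), p a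
          = ∑ a ∈ S, (if (C.prF a : ℝ) * W ≤ x then p a else 0) := Finset.sum_filter _ _
      have eX' : ∑ a ∈ S.filter (fun a => (C.prF a : ℝ) * W ≤ x'), p a
          = ∑ a ∈ S, (if (C.prF a : ℝ) * W ≤ x' then p a else 0) := Finset.sum_filter _ _
      have eY' : ∑ a ∈ S.filter (fun a => (nx a : ℝ) * W ≤ x'), p a
          = ∑ a ∈ S, (if (nx a : ℝ) * W ≤ x' then p a else 0) := Finset.sum_filter _ _
      have hXX' : S.filter (fun a => (C.prF a : ℝ) * W ≤ x) ⊆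
          S.filter (fun a => (C.prF a : ℝ) * W ≤ x') := by
        intro a ha
        rw [Finset.mem_filter] at ha ⊢
        exact ⟨ha.1, le_trans ha.2 hxx'⟩
      have hXle : ∑ a ∈ S.filter (fun a => (C.prF a : ℝ) * W ≤ x), p a ≤
          ∑ a ∈ S.filter (fun a => (C.prF a : ℝ) * W ≤ x'), p a :=
        Finset.sum_le_sum_of_subset_of_nonneg hXX' (fun a _ _ => (hp a).le)
      rcases core_sdiff S C.prF nx p hinjS hnx_gt hnx_le W hW x' with
        hL | ⟨a₀, ha₀S, ha₀x, ha₀nx, hsum, huniq⟩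
      · rw [eX', eY'] at hL
        rw [eX, eX'] at hXle
        linarith only [hL, hXle, hcsum]
      · by_cases hs0 : (C.prF a₀ : ℝ) * W ≤ x
        · -- a₀ was already covered at x; use the θ fresh non-violators
          have ha₀A : C.prF a₀ ≤ A := by
            have h1 : (C.prF a₀ : ℝ) ≤ x / W := (le_div_iff₀ hW).mpr hs0
            have h2 : (C.prF a₀ : ℝ) < (A : ℝ) + 1 := lt_of_le_of_lt h1 hA2
            have h3 : C.prF a₀ < A + 1 := by exact_mod_cast h2
            omega
          have hnoS : ∀ a ∈ S, ¬ (A + 1 ≤ C.prF a ∧ C.prF a ≤ A + θn) := by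
            rintro a haS ⟨h1, h2⟩
            have hlt : C.prF a₀ < C.prF a := by omega
            have := hnx_le a₀ ha₀S a haS hlt
            exact ha₀nx (le_trans (mul_le_mul_of_nonneg_right
              (by exact_mod_cast this : ((nx a₀ : ℝ)) ≤ (C.prF a : ℝ)) hW.le)
              (hcast _ (by exact_mod_cast h2)))
          have hkE : A + θn ≤ k := by
            by_contra hcon
            push_neg at hcon
            have h1 : nx a₀ ≤ A + θn := le_trans (hnx_le_k1 a₀ ha₀S) (by omega)
            exact ha₀nx (hcast _ (by exact_mod_cast h1))
          obtain ⟨D', hD'sub, hD'sum, hD'term⟩ := hpkg hkE hnoS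
          have hmono := sum_mono_extra (F \ S) D' hD'sub
            (fun a => if wbaseW w C a ≤ x' then C.rem a else 0)
            (fun a => if wbaseW w C a ≤ x then C.rem a else 0)
            p hcmono hD'term
          have hpa₀ : p a₀ ≤ μ * pt q := by
            have h1 := (hdist a₀).2
            have h2 := hSpt a₀ ha₀S
            have h3 : pt q ≤ μ * pt q := le_mul_of_one_le_left hptq.le hμ1.le
            linarith only [h1, h2, h3]
          rw [eX', eY'] at hsum
          rw [eX, eX'] at hXle
          linarith only [hXle, hsum, hpa₀, hD'sum, hmono, hcsum]
        · -- a₀ was not covered at x: the old covered violators stay covered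
          have hXY' : S.filter (fun a => (C.prF a : ℝ) * W ≤ x) ⊆
              S.filter (fun a => (nx a : ℝ) * W ≤ x') := by
            intro b hb
            rw [Finset.mem_filter] at hb ⊢
            obtain ⟨hbS, hbx⟩ := hb
            refine ⟨hbS, ?_⟩
            by_contra hcon
            exact hs0 (huniq b hbS (le_trans hbx hxx') hcon ▸ hbx)
          have hXle2 : ∑ a ∈ S.filter (fun a => (C.prF a : ℝ) * W ≤ x), p a ≤
              ∑ a ∈ S.filter (fun a => (nx a : ℝ) * W ≤ x'), p a :=
            Finset.sum_le_sum_of_subset_of_nonneg hXY' (fun a _ _ => (hp a).le)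
          rw [eX, eY'] at hXle2
          linarith only [hXle2, hcsum]
    · -- q's bar is not covered even at x'
      rw [if_neg hm']
      have hX0 : ∑ a ∈ S, (if (C.prF a : ℝ) * W ≤ x then p a else 0) = 0 := by
        refine Finset.sum_eq_zero ?_
        intro a ha
        rw [if_neg]
        intro hcon
        exact hm' (le_trans (le_trans (mul_le_mul_of_nonneg_right
          (by exact_mod_cast hm_le a ha) hW.le) hcon) hxx')
      have hnoS : ∀ a ∈ S, ¬ (A + 1 ≤ C.prF a ∧ C.prF a ≤ A + θn) := by
        rintro a haS ⟨_, h2⟩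
        have h3 : m ≤ A + θn := le_trans (hm_le a haS) h2
        exact hm' (hcast _ (by exact_mod_cast h3))
      have hkE : A + θn ≤ k := by
        by_contra hcon
        push_neg at hcon
        have h1 : m ≤ A + θn := le_trans hm_le_k1 (by omega)
        exact hm' (hcast _ (by exact_mod_cast h1))
      obtain ⟨D', hD'sub, hD'sum, hD'term⟩ := hpkg hkE hnoS
      have hmono := sum_mono_extra (F \ S) D' hD'sub
        (fun a => if wbaseW w C a ≤ x' then C.rem a else 0)
        (fun a => if wbaseW w C a ≤ x then C.rem a else 0)
        p hcmono hD'term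
      have hY0 : (0:ℝ) ≤ ∑ a ∈ S, (if (nx a : ℝ) * W ≤ x' then p a else 0) := by
        refine Finset.sum_nonneg ?_
        intro a _
        split_ifs
        exacts [(hp a).le, le_refl 0]
      have hpq' : p q ≤ μ * pt q := (hdq.2).le
      rw [hX0]
      linarith only [hY0, hpq', hD'sum, hmono]
end
end

section
/- Run Algorithm 3 on an SPPT instance with distortion at most μ. For any real x ≥ 0 and time t, if cov(x,t) is strictly decreasing at t due to the algorithm's processing of a job (i.e., the job currently being processed has positive volume covered by x), then cov(x,t) = V(t), the total remaining processing time of all jobs pending in the algorithm at t. -/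
open MeasureTheory
open scoped Classical

noncomputable section

variable {n : ℕ} {cls : Fin n → ℤ}

/-- In a run of Algorithm 3 on an SPPT instance with distortion at
most `μ` (weights being powers of two; every full bin weighs at most its partial bin),
if `cov(x, t)` is strictly decreasing at `t` due to the processing of a job — i.e. the
currently processed job (the top-priority job of the heaviest partial bin) has
positive volume covered by the bar `x` — then `cov(x, t) = V(t)`. -/
theorem wprocessing_covers_everything
    (n : ℕ) (μ : ℝ) (p pt w : Fin n → ℝ) (cls : Fin n → ℤ)
    (hp : ∀ q, 0 < p q) (hpt : ∀ q, 0 < pt q)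
    (hw : ∀ q, w q = 2 ^ cls q)
    (hdist : ∀ q, pt q ≤ p q ∧ p q < μ * pt q)
    (C : WConfig n cls)
    (hbal : ∀ i, binWeightF w C i ≤ binWeightP w C i)
    (x : ℝ) (hx : 0 ≤ x)
    (q : Fin n) (hq : q ∈ C.QP)
    (htop : C.prP q = (C.QP.filter fun a => cls a = cls q).card)
    (hmax : ∀ i, binWeightP w C i ≤ binWeightP w C (cls q))
    (hcovered : wbaseW w C q ≤ x) (hpos : 0 < C.rem q) :
    covW w C x = volW C := by
  have hwpos : ∀ a, 0 < w a := by
    intro a; rw [hw]; positivity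
  have hqF : q ∉ C.QF := fun h => (Finset.disjoint_left.mp C.disj h) hq
  -- wbase of q equals the total weight of its partial bin
  have hkey : wbaseW w C q = binWeightP w C (cls q) := by
    unfold wbaseW binWeightP
    rw [if_neg hqF]
    apply Finset.sum_congr _ (fun _ _ => rfl)
    apply Finset.filter_congr
    intro a ha
    simp only [and_iff_left_iff_imp]
    intro hacls
    have hmem : a ∈ C.QP.filter fun b => cls b = cls q := by
      simp [Finset.mem_filter, ha, hacls]
    have := (C.bijP (cls q)).mapsTo hmem
    rw [htop]
    exact this.2
  -- every pending job has wbase ≤ binWeightP w C (cls q)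
  have hbound : ∀ a ∈ C.QF ∪ C.QP, wbaseW w C a ≤ binWeightP w C (cls q) := by
    intro a ha
    rcases Finset.mem_union.mp ha with haF | haP
    · have h1 : wbaseW w C a ≤ binWeightF w C (cls a) := by
        unfold wbaseW binWeightF
        rw [if_pos haF]
        apply Finset.sum_le_sum_of_subset_of_nonneg
        · intro b hb
          simp only [Finset.mem_filter] at hb ⊢
          exact ⟨hb.1, hb.2.1⟩
        · intro b _ _; exact (hwpos b).le
      exact h1.trans ((hbal (cls a)).trans (hmax (cls a)))
    · by_cases haF : a ∈ C.QF
      · exact absurd haP (Finset.disjoint_left.mp C.disj haF)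
      have h1 : wbaseW w C a ≤ binWeightP w C (cls a) := by
        unfold wbaseW binWeightP
        rw [if_neg haF]
        apply Finset.sum_le_sum_of_subset_of_nonneg
        · intro b hb
          simp only [Finset.mem_filter] at hb ⊢
          exact ⟨hb.1, hb.2.1⟩
        · intro b _ _; exact (hwpos b).le
      exact h1.trans (hmax (cls a))
  unfold covW volW
  apply Finset.sum_congr rfl
  intro a ha
  rw [if_pos ((hbound a ha).trans (hkey ▸ hcovered))]
end
end
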